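/- arXiv:2202.04371 — 15 statements merged into one kernel-verified Lean document; each statement's English description precedes it below -/
import Mathlib

section
/- Let S be a finite set of size at least r, H_1,...,H_q subsets of S, and r, r_1,...,r_q non-negative integers satisfying |H_i ∩ H_j| ≤ r_i + r_j − r for all 1 ≤ i < j ≤ q. Then the family I = {X ⊆ S : |X| ≤ r and |X ∩ H_i| ≤ r_i for all i} is the collection of independent sets of a matroid on S. -/
open Matroid Set

variable {α : Type*}

/-- The rank of a set `Z` in a matroid `M`: the maximum size of an independent subset of `Z`. -/
noncomputable def mrk (M : Matroid α) (Z : Set α) : ℕ :=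
  sSup {n | ∃ I, M.Indep I ∧ I ⊆ Z ∧ I.ncard = n}

/-- Deletion of a set `D` from a matroid `M`. -/
def mdelete (M : Matroid α) (D : Set α) : Matroid α := M ↾ (M.E \ D)

/-- Contraction of a set `C` in a matroid `M`, defined as `(M✶ \ C)✶`. -/
def mcontract (M : Matroid α) (C : Set α) : Matroid α := (mdelete M✶ C)✶

/-- `N` is a minor of `M` if it is obtained by a contraction followed by a deletion. -/
def IsMinorOf (N M : Matroid α) : Prop := ∃ C D, N = mdelete (mcontract M C) D

/-- `M` is an elementary split matroid: its independent sets are the sets `X ⊆ S` with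
`|X| ≤ r` and `|X ∩ H i| ≤ r i` for hyperedges `H i ⊆ S` satisfying (H1). -/
def IsElemSplit (M : Matroid α) : Prop :=
  ∃ (q : ℕ) (H : Fin q → Set α) (r : ℕ) (rr : Fin q → ℕ),
    M.E.Finite ∧ r ≤ M.E.ncard ∧ (∀ i, H i ⊆ M.E) ∧
    (∀ i j : Fin q, i ≠ j → (H i ∩ H j).ncard + r ≤ rr i + rr j) ∧
    ∀ X, X ⊆ M.E → (M.Indep X ↔ X.ncard ≤ r ∧ ∀ i, (X ∩ H i).ncard ≤ rr i)

/-- `M` is (isomorphic to) the uniform matroid `U_{k,n}`. -/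
def IsUnif (M : Matroid α) (k n : ℕ) : Prop :=
  M.E.Finite ∧ M.E.ncard = n ∧ ∀ I, I ⊆ M.E → (M.Indep I ↔ I.ncard ≤ k)

/-- `e` is a loop of `M`. -/
def IsLoopOf (M : Matroid α) (e : α) : Prop := e ∈ M.E ∧ ¬ M.Indep {e}

/-- `e` is a coloop of `M`, i.e. a loop of the dual. -/
def IsColoopOf (M : Matroid α) (e : α) : Prop := IsLoopOf M✶ e

/-- A set `Z` is cyclic in `M` if the restriction `M | Z` has no coloops. -/
def IsCyclicSet (M : Matroid α) (Z : Set α) : Prop :=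
  Z ⊆ M.E ∧ ∀ e ∈ Z, ¬ IsColoopOf (M ↾ Z) e

/-- A proper cyclic flat: a cyclic flat of nonzero rank that is not the ground set. -/
def ProperCyclicFlat (M : Matroid α) (F : Set α) : Prop :=
  M.IsFlat F ∧ IsCyclicSet M F ∧ mrk M F ≠ 0 ∧ F ≠ M.E

/-- `M` is connected: `r(X) + r(S − X) > r(S)` for every nonempty proper `X ⊆ S`. -/
def ConnectedM (M : Matroid α) : Prop :=
  ∀ X, X ⊆ M.E → X.Nonempty → X ≠ M.E → mrk M M.E < mrk M X + mrk M (M.E \ X)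

/-- `M` is (isomorphic to) the matroid `U_{0,1} ⊕ U_{1,2} ⊕ U_{1,1}`. -/
def IsU01U12U11 (M : Matroid α) : Prop :=
  ∃ a b c d : α, ([a, b, c, d] : List α).Nodup ∧ M.E = {a, b, c, d} ∧
    ∀ X, X ⊆ M.E → (M.Indep X ↔ a ∉ X ∧ ¬ ({b, c} : Set α) ⊆ X)

theorem stmt0 {α : Type*} (S : Set α) (hSfin : S.Finite) (q r : ℕ)
    (H : Fin q → Set α) (rr : Fin q → ℕ)
    (hH : ∀ i, H i ⊆ S) (hrS : r ≤ S.ncard)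
    (h1 : ∀ i j : Fin q, i ≠ j → (H i ∩ H j).ncard + r ≤ rr i + rr j) :
    ∃ M : Matroid α, M.E = S ∧
      ∀ X, X ⊆ S → (M.Indep X ↔ X.ncard ≤ r ∧ ∀ i, (X ∩ H i).ncard ≤ rr i) := by
  set Ind : Set α → Prop := fun X => X ⊆ S ∧ X.ncard ≤ r ∧ ∀ i, (X ∩ H i).ncard ≤ rr i with hInd
  have indep_empty : Ind ∅ := by
    refine ⟨empty_subset _, by simp, fun i => by simp⟩
  have indep_subset : ∀ ⦃I J⦄, Ind J → I ⊆ J → Ind I := by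
    rintro I J ⟨hJS, hJr, hJi⟩ hIJ
    have hIfin : I.Finite := hSfin.subset (hIJ.trans hJS)
    refine ⟨hIJ.trans hJS, le_trans (ncard_le_ncard hIJ (hSfin.subset hJS)) hJr, fun i => ?_⟩
    exact le_trans (ncard_le_ncard (inter_subset_inter_left _ hIJ)
      ((hSfin.subset hJS).inter_of_left _)) (hJi i)
  have indep_aug : ∀ ⦃I J⦄, Ind I → Ind J → I.ncard < J.ncard →
      ∃ e ∈ J, e ∉ I ∧ Ind (insert e I) := by
    rintro I J ⟨hIS, hIr, hIi⟩ ⟨hJS, hJr, hJi⟩ hlt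
    have hIfin : I.Finite := hSfin.subset hIS
    have hJfin : J.Finite := hSfin.subset hJS
    by_contra hcon
    push_neg at hcon
    -- each e in J \ I is blocked by a tight index with e ∈ H i
    have hblock : ∀ e ∈ J, e ∉ I → ∃ i, e ∈ H i ∧ (I ∩ H i).ncard = rr i := by
      intro e heJ heI
      have h := hcon e heJ heI
      simp only [hInd] at h
      push_neg at h
      have hsub : insert e I ⊆ S := insert_subset (hJS heJ) hIS
      have hcard : (insert e I).ncard ≤ r := by
        rw [ncard_insert_of_notMem heI hIfin]
        omega
      obtain ⟨i, hi⟩ := h hsub hcard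
      by_cases heH : e ∈ H i
      · refine ⟨i, heH, ?_⟩
        have : (insert e I) ∩ H i = insert e (I ∩ H i) := by
          rw [insert_inter_of_mem heH]
        rw [this] at hi
        have := ncard_insert_le e (I ∩ H i)
        have := hIi i
        omega
      · rw [insert_inter_of_notMem heH] at hi
        exact absurd (hIi i) (by omega)
    -- tight index uniqueness
    have htight : ∀ i j : Fin q, (I ∩ H i).ncard = rr i → (I ∩ H j).ncard = rr j → i = j := by
      intro i j hi hj
      by_contra hne
      have h1' := h1 i j hne
      have hIr' : I.ncard < r := lt_of_lt_of_le hlt hJr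
      have hu : ((I ∩ H i) ∪ (I ∩ H j)).ncard ≤ I.ncard :=
        ncard_le_ncard (union_subset inter_subset_left inter_subset_left) hIfin
      have hint : ((I ∩ H i) ∩ (I ∩ H j)).ncard ≤ (H i ∩ H j).ncard := by
        refine ncard_le_ncard ?_ (hSfin.subset (inter_subset_left.trans (hH i)))
        intro x hx
        exact ⟨hx.1.2, hx.2.2⟩
      have hie := ncard_inter_add_ncard_union (I ∩ H i) (I ∩ H j)
        (hIfin.inter_of_left _) (hIfin.inter_of_left _)
      omega
    obtain ⟨e0, he0⟩ := exists_mem_notMem_of_ncard_lt_ncard hlt hIfin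
    obtain ⟨i0, hei0, hti0⟩ := hblock e0 he0.1 he0.2
    have hJdiff : J \ I ⊆ H i0 := by
      intro e he
      obtain ⟨i, hei, hti⟩ := hblock e he.1 he.2
      rwa [htight i i0 hti hti0] at hei
    -- counting contradiction
    have hdisj : Disjoint (J \ I) (I ∩ J ∩ H i0) :=
      Disjoint.mono_right (inter_subset_left.trans inter_subset_left) disjoint_sdiff_left
    have hsub2 : (J \ I) ∪ (I ∩ J ∩ H i0) ⊆ J ∩ H i0 := by
      rintro x (hx | hx)
      · exact ⟨hx.1, hJdiff hx⟩
      · exact ⟨hx.1.2, hx.2⟩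
    have hc1 : (J \ I).ncard + (I ∩ J ∩ H i0).ncard ≤ (J ∩ H i0).ncard := by
      rw [← ncard_union_eq hdisj (hJfin.diff (t := I)) ((hIfin.inter_of_left _).inter_of_left _)]
      exact ncard_le_ncard hsub2 (hJfin.inter_of_left _)
    have hc2 : (I \ J).ncard < (J \ I).ncard := by
      have hI' := ncard_inter_add_ncard_diff_eq_ncard I J hIfin
      have hJ' := ncard_inter_add_ncard_diff_eq_ncard J I hJfin
      rw [inter_comm J I] at hJ'
      omega
    have hc3 : rr i0 ≤ (I ∩ J ∩ H i0).ncard + (I \ J).ncard := by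
      rw [← hti0]
      calc (I ∩ H i0).ncard ≤ ((I ∩ J ∩ H i0) ∪ (I \ J)).ncard := by
            refine ncard_le_ncard ?_ (((hIfin.inter_of_left _).inter_of_left _).union (hIfin.diff (t := J)))
            intro x hx
            by_cases hxJ : x ∈ J
            · exact Or.inl ⟨⟨hx.1, hxJ⟩, hx.2⟩
            · exact Or.inr ⟨hx.1, hxJ⟩
        _ ≤ (I ∩ J ∩ H i0).ncard + (I \ J).ncard := ncard_union_le _ _
    have := hJi i0
    omega
  have subset_ground : ∀ ⦃I⦄, Ind I → I ⊆ S := fun I hI => hI.1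
  refine ⟨(IndepMatroid.ofFinite hSfin Ind indep_empty indep_subset indep_aug subset_ground).matroid,
    rfl, fun X hX => ?_⟩
  rw [IndepMatroid.matroid_indep_iff, IndepMatroid.ofFinite_indep]
  exact ⟨fun h => ⟨h.2.1, h.2.2⟩, fun h => ⟨hX, h.1, h.2⟩⟩
end

section
/- Under the hypotheses |S| ≥ r and |H_i ∩ H_j| ≤ r_i + r_j − r for all i < j, the matroid with independent sets I = {X ⊆ S : |X| ≤ r, |X ∩ H_i| ≤ r_i for all i} has rank function r_M(Z) = min{ r, |Z|, min_{1≤i≤q} (|Z − H_i| + r_i) } for every Z ⊆ S. -/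
open Matroid Set

variable {α : Type*}

theorem stmt1 {α : Type*} (S : Set α) (hSfin : S.Finite) (q r : ℕ)
    (H : Fin q → Set α) (rr : Fin q → ℕ)
    (hH : ∀ i, H i ⊆ S) (hrS : r ≤ S.ncard)
    (h1 : ∀ i j : Fin q, i ≠ j → (H i ∩ H j).ncard + r ≤ rr i + rr j)
    (M : Matroid α) (hME : M.E = S)
    (hMI : ∀ X, X ⊆ S → (M.Indep X ↔ X.ncard ≤ r ∧ ∀ i, (X ∩ H i).ncard ≤ rr i)) :
    ∀ Z, Z ⊆ S → (mrk M Z : ℕ∞) =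
      min (min (r : ℕ∞) (Z.ncard : ℕ∞))
        ((Finset.univ : Finset (Fin q)).inf fun i => (((Z \ H i).ncard + rr i : ℕ) : ℕ∞)) := by
  intro Z hZ
  classical
  have hZfin : Z.Finite := hSfin.subset hZ
  set R : ℕ∞ := min (min (r : ℕ∞) (Z.ncard : ℕ∞))
      ((Finset.univ : Finset (Fin q)).inf fun i => (((Z \ H i).ncard + rr i : ℕ) : ℕ∞)) with hRdef
  have hRr : R ≤ (r : ℕ∞) := le_trans (min_le_left _ _) (min_le_left _ _)
  have hRtop : R ≠ ⊤ := ne_top_of_le_ne_top (ENat.coe_ne_top r) hRr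
  set m := R.toNat with hmdef
  have hmR : (m : ℕ∞) = R := ENat.coe_toNat hRtop
  have hm_r : m ≤ r := by exact_mod_cast hmR ▸ hRr
  have hm_Z : m ≤ Z.ncard := by
    have : (m : ℕ∞) ≤ (Z.ncard : ℕ∞) := hmR ▸ le_trans (min_le_left _ _) (min_le_right _ _)
    exact_mod_cast this
  have hm_i : ∀ i : Fin q, m ≤ (Z \ H i).ncard + rr i := by
    intro i
    have : (m : ℕ∞) ≤ (((Z \ H i).ncard + rr i : ℕ) : ℕ∞) :=
      hmR ▸ le_trans (min_le_right _ _) (Finset.inf_le (Finset.mem_univ i))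
    exact_mod_cast this
  -- upper bound
  have hub : ∀ I, M.Indep I → I ⊆ Z → I.ncard ≤ m := by
    intro I hI hIZ
    have hIS : I ⊆ S := hIZ.trans hZ
    have hIfin : I.Finite := hSfin.subset hIS
    obtain ⟨h1I, h2I⟩ := (hMI I hIS).mp hI
    have : (I.ncard : ℕ∞) ≤ (m : ℕ∞) := by
      rw [hmR, hRdef]
      refine le_min (le_min (by exact_mod_cast h1I)
        (by exact_mod_cast Set.ncard_le_ncard hIZ hZfin)) (Finset.le_inf fun i _ => ?_)
      have hsplit : (I \ H i).ncard + (I ∩ H i).ncard = I.ncard := by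
        rw [← Set.ncard_union_eq (Set.disjoint_of_subset_right Set.inter_subset_right
          Set.disjoint_sdiff_left) (hIfin.diff) (hIfin.inter_of_left _),
          Set.diff_union_inter]
      have hd : (I \ H i).ncard ≤ (Z \ H i).ncard :=
        Set.ncard_le_ncard (Set.diff_subset_diff_left hIZ) (hZfin.diff)
      have := h2I i
      exact_mod_cast by omega
    exact_mod_cast this
  -- existence of independent sets of every size ≤ m
  have hkey : ∀ k, k ≤ m → ∃ I, M.Indep I ∧ I ⊆ Z ∧ I.ncard = k := by
    intro k
    induction k with
    | zero => exact fun _ => ⟨∅, M.empty_indep, Set.empty_subset _, Set.ncard_empty _⟩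
    | succ k ih =>
      intro hk
      obtain ⟨I, hI, hIZ, hIc⟩ := ih (Nat.le_of_succ_le hk)
      have hIS : I ⊆ S := hIZ.trans hZ
      have hIfin : I.Finite := hSfin.subset hIS
      by_contra hcon
      push_neg at hcon
      have hne : (Z \ I).Nonempty := by
        rw [Set.nonempty_iff_ne_empty]
        intro h
        have hZI : Z ⊆ I := by rwa [Set.diff_eq_empty] at h
        have := Set.ncard_le_ncard hZI hIfin
        omega
      have hstep : ∀ e ∈ Z \ I, ∃ i, e ∈ H i ∧ (I ∩ H i).ncard = rr i := by
        intro e he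
        have heZ := he.1
        have heI := he.2
        have hcard : (insert e I).ncard = k + 1 := by
          rw [Set.ncard_insert_of_notMem heI hIfin, hIc]
        have hnotind : ¬ M.Indep (insert e I) := by
          intro h
          exact hcon (insert e I) h (Set.insert_subset heZ hIZ) hcard
        have hsub : insert e I ⊆ S := Set.insert_subset (hZ heZ) hIS
        rw [hMI _ hsub] at hnotind
        push_neg at hnotind
        obtain ⟨i, hi⟩ := hnotind (by omega)
        have h2 := ((hMI I hIS).mp hI).2 i
        have heH : e ∈ H i := by
          by_contra heH
          rw [Set.insert_inter_of_notMem heH] at hi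
          omega
        refine ⟨i, heH, ?_⟩
        have hsub2 : insert e I ∩ H i ⊆ insert e (I ∩ H i) := by
          rintro x ⟨hx1, hx2⟩
          rcases hx1 with rfl | hx1
          · exact Set.mem_insert _ _
          · exact Set.mem_insert_of_mem _ ⟨hx1, hx2⟩
        have hle2 : (insert e I ∩ H i).ncard ≤ (I ∩ H i).ncard + 1 :=
          le_trans (Set.ncard_le_ncard hsub2 (((hIfin.inter_of_left _)).insert e))
            (Set.ncard_insert_le _ _)
        omega
      obtain ⟨e0, he0⟩ := hne
      obtain ⟨i0, he0H, hi0⟩ := hstep e0 he0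
      by_cases hA : Z \ I ⊆ H i0
      · have hsub1 : Z \ H i0 ⊆ I \ H i0 := by
          rintro x ⟨hx1, hx2⟩
          refine ⟨?_, hx2⟩
          by_contra hxI
          exact hx2 (hA ⟨hx1, hxI⟩)
        have hcard1 : (Z \ H i0).ncard ≤ (I \ H i0).ncard :=
          Set.ncard_le_ncard hsub1 (hIfin.diff)
        have hsplit : (I \ H i0).ncard + (I ∩ H i0).ncard = I.ncard := by
          rw [← Set.ncard_union_eq (Set.disjoint_of_subset_right Set.inter_subset_right
            Set.disjoint_sdiff_left) (hIfin.diff) (hIfin.inter_of_left _),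
            Set.diff_union_inter]
        have := hm_i i0
        omega
      · rw [Set.not_subset] at hA
        obtain ⟨e1, he1, he1H⟩ := hA
        obtain ⟨i1, he1H1, hi1⟩ := hstep e1 he1
        have hne01 : i0 ≠ i1 := fun h => he1H (h ▸ he1H1)
        have hq := h1 i0 i1 hne01
        have hu : (I ∩ H i0 ∪ I ∩ H i1).ncard + (I ∩ H i0 ∩ (I ∩ H i1)).ncard
            = (I ∩ H i0).ncard + (I ∩ H i1).ncard :=
          Set.ncard_union_add_ncard_inter _ _ (hIfin.inter_of_left _) (hIfin.inter_of_left _)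
        have h2 : (I ∩ H i0 ∪ I ∩ H i1).ncard ≤ I.ncard :=
          Set.ncard_le_ncard (Set.union_subset Set.inter_subset_left Set.inter_subset_left) hIfin
        have h3 : (I ∩ H i0 ∩ (I ∩ H i1)).ncard ≤ (H i0 ∩ H i1).ncard := by
          refine Set.ncard_le_ncard ?_ ((hSfin.subset (hH i0)).inter_of_left _)
          rintro x ⟨⟨_, hx1⟩, ⟨_, hx2⟩⟩
          exact ⟨hx1, hx2⟩
        omega
  have hgreat : IsGreatest {n | ∃ I, M.Indep I ∧ I ⊆ Z ∧ I.ncard = n} m := by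
    constructor
    · exact hkey m le_rfl
    · rintro n ⟨I, hI, hIZ, rfl⟩
      exact hub I hI hIZ
  have : mrk M Z = m := hgreat.csSup_eq
  rw [this, hmR]
end

section
/- Under the hypotheses |S| ≥ r, |H_i ∩ H_j| ≤ r_i + r_j − r for all i < j, and |S − H_i| + r_i ≥ r for all i, the matroid with independent sets {X ⊆ S : |X| ≤ r, |X ∩ H_i| ≤ r_i for all i} has rank exactly r. -/
open Matroid Set

variable {α : Type*}

theorem stmt2 {α : Type*} (S : Set α) (hSfin : S.Finite) (q r : ℕ)
    (H : Fin q → Set α) (rr : Fin q → ℕ)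
    (hH : ∀ i, H i ⊆ S) (hrS : r ≤ S.ncard)
    (h1 : ∀ i j : Fin q, i ≠ j → (H i ∩ H j).ncard + r ≤ rr i + rr j)
    (h2 : ∀ i, r ≤ (S \ H i).ncard + rr i)
    (M : Matroid α) (hME : M.E = S)
    (hMI : ∀ X, X ⊆ S → (M.Indep X ↔ X.ncard ≤ r ∧ ∀ i, (X ∩ H i).ncard ≤ rr i)) :
    mrk M S = r := by
  obtain ⟨B, hB⟩ := M.exists_isBase
  have hBS : B ⊆ S := hME ▸ hB.subset_ground
  have hBfin : B.Finite := hSfin.subset hBS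
  obtain ⟨hBr, hBH⟩ := (hMI B hBS).1 hB.indep
  -- B has size exactly r
  have hcard : B.ncard = r := by
    by_contra hne
    have hlt : B.ncard < r := lt_of_le_of_ne hBr hne
    -- find an element to add
    have key : ∃ e, e ∉ B ∧ M.Indep (insert e B) := by
      by_cases htight : ∃ i, rr i ≤ (B ∩ H i).ncard
      · obtain ⟨i, hi⟩ := htight
        have hieq : (B ∩ H i).ncard = rr i := le_antisymm (hBH i) hi
        have hri : rr i ≤ B.ncard :=
          hieq ▸ ncard_le_ncard inter_subset_left hBfin
        have hdiff : (B \ H i).ncard < (S \ H i).ncard := by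
          have h3 : (B ∩ H i).ncard + (B \ H i).ncard = B.ncard :=
            ncard_inter_add_ncard_diff_eq_ncard B (H i) hBfin
          have h4 := h2 i
          omega
        obtain ⟨e, heS, heB⟩ := exists_mem_notMem_of_ncard_lt_ncard hdiff
          (hBfin.diff (t := H i))
        have heB' : e ∉ B := fun h => heB ⟨h, heS.2⟩
        refine ⟨e, heB', (hMI _ (insert_subset heS.1 hBS)).2 ⟨?_, fun j => ?_⟩⟩
        · rw [ncard_insert_of_notMem heB' hBfin]; omega
        · by_cases hji : j = i
          · subst hji
            have : insert e B ∩ H j = B ∩ H j := by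
              ext x
              simp only [mem_inter_iff, mem_insert_iff]
              constructor
              · rintro ⟨(rfl | hx), hxH⟩
                · exact absurd hxH heS.2
                · exact ⟨hx, hxH⟩
              · exact fun ⟨hx, hxH⟩ => ⟨Or.inr hx, hxH⟩
            rw [this]; exact hBH j
          · -- j is not tight
            have hjnt : (B ∩ H j).ncard < rr j := by
              have hu : (B ∩ H i) ∪ (B ∩ H j) ⊆ B := by
                intro x hx; rcases hx with hx | hx <;> exact hx.1
              have hv : (B ∩ H i) ∩ (B ∩ H j) ⊆ H i ∩ H j := by
                intro x hx; exact ⟨hx.1.2, hx.2.2⟩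
              have he1 : ((B ∩ H i) ∪ (B ∩ H j)).ncard + ((B ∩ H i) ∩ (B ∩ H j)).ncard
                  = (B ∩ H i).ncard + (B ∩ H j).ncard :=
                ncard_union_add_ncard_inter _ _ (hBfin.inter_of_left _) (hBfin.inter_of_left _)
              have he2 : ((B ∩ H i) ∪ (B ∩ H j)).ncard ≤ B.ncard :=
                ncard_le_ncard hu hBfin
              have he3 : ((B ∩ H i) ∩ (B ∩ H j)).ncard ≤ (H i ∩ H j).ncard :=
                ncard_le_ncard hv (hSfin.subset (fun x hx => hH i hx.1))
              have he4 := h1 i j (Ne.symm hji)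
              omega
            calc (insert e B ∩ H j).ncard ≤ (insert e (B ∩ H j)).ncard :=
                  ncard_le_ncard (by
                    rintro x ⟨(rfl | hx), hxH⟩
                    · exact Or.inl rfl
                    · exact Or.inr ⟨hx, hxH⟩) ((hBfin.inter_of_left _).insert e)
              _ ≤ (B ∩ H j).ncard + 1 := ncard_insert_le _ _
              _ ≤ rr j := hjnt
      · push_neg at htight
        have hdiff : B.ncard < S.ncard := lt_of_lt_of_le hlt hrS
        obtain ⟨e, heS, heB⟩ := exists_mem_notMem_of_ncard_lt_ncard hdiff hBfin
        refine ⟨e, heB, (hMI _ (insert_subset heS hBS)).2 ⟨?_, fun j => ?_⟩⟩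
        · rw [ncard_insert_of_notMem heB hBfin]; omega
        · calc (insert e B ∩ H j).ncard ≤ (insert e (B ∩ H j)).ncard :=
                ncard_le_ncard (by
                  rintro x ⟨(rfl | hx), hxH⟩
                  · exact Or.inl rfl
                  · exact Or.inr ⟨hx, hxH⟩) ((hBfin.inter_of_left _).insert e)
            _ ≤ (B ∩ H j).ncard + 1 := ncard_insert_le _ _
            _ ≤ rr j := htight j
    obtain ⟨e, heB, hind⟩ := key
    exact heB ((hB.eq_of_subset_indep hind (subset_insert e B)) ▸ mem_insert e B)
  -- compute the sSup
  have hub : ∀ n ∈ {n | ∃ I, M.Indep I ∧ I ⊆ S ∧ I.ncard = n}, n ≤ r := by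
    rintro n ⟨I, hI, hIS, rfl⟩
    exact ((hMI I hIS).1 hI).1
  have hmem : r ∈ {n | ∃ I, M.Indep I ∧ I ⊆ S ∧ I.ncard = n} :=
    ⟨B, hB.indep, hBS, hcard⟩
  exact le_antisymm (csSup_le ⟨r, hmem⟩ hub) (le_csSup ⟨r, hub⟩ hmem)
end

section
/- The class of elementary split matroids is closed under k-truncation: if M is an elementary split matroid of rank r and 0 ≤ k < r, then the k-truncation of M is also an elementary split matroid. -/
open Matroid Set

variable {α : Type*}

theorem stmt3 {α : Type*} (M N : Matroid α) (hM : IsElemSplit M) (k : ℕ)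
    (hk : k < mrk M M.E) (hNE : N.E = M.E)
    (hNI : ∀ X, X ⊆ M.E → (N.Indep X ↔ M.Indep X ∧ X.ncard ≤ k)) :
    IsElemSplit N := by
  obtain ⟨q, H, r, rr, hfin, hr, hH, h1, hMI⟩ := hM
  have hrle : mrk M M.E ≤ r := by
    refine csSup_le ⟨0, ∅, M.empty_indep, empty_subset _, by simp⟩ ?_
    rintro n ⟨I, hI, hIE, rfl⟩
    exact ((hMI I hI.subset_ground).mp hI).1
  have hkr : k < r := lt_of_lt_of_le hk hrle
  refine ⟨q, fun i => if rr i < k then H i else ∅, k, fun i => min (rr i) k,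
    hNE ▸ hfin, hNE ▸ le_trans hkr.le hr, ?_, ?_, ?_⟩
  · intro i
    dsimp only
    split
    · exact hNE ▸ hH i
    · exact empty_subset _
  · intro i j hij
    have := h1 i j hij
    dsimp only
    split_ifs <;> (try simp only [inter_empty, empty_inter, ncard_empty]) <;> omega
  · intro X hX
    rw [hNE] at hX
    have hXfin : X.Finite := hfin.subset hX
    have hXk : ∀ i, (X ∩ H i).ncard ≤ X.ncard :=
      fun i => ncard_le_ncard inter_subset_left hXfin
    rw [hNI X hX, hMI X hX]
    constructor
    · rintro ⟨⟨hXr, hXH⟩, hXle⟩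
      refine ⟨hXle, fun i => ?_⟩
      dsimp only
      split
      · exact le_min (hXH i) (le_trans (hXk i) hXle)
      · simp
    · rintro ⟨hXle, hXH⟩
      refine ⟨⟨le_trans hXle hkr.le, fun i => ?_⟩, hXle⟩
      by_cases hi : rr i < k
      · have := hXH i
        simp only [hi, if_true] at this
        exact le_trans this (min_le_left _ _)
      · exact le_trans (le_trans (hXk i) hXle) (not_lt.mp hi)
end

section
/- The class of elementary split matroids is closed under deletion: if M is an elementary split matroid on S and Z ⊆ S, then M \ Z (the restriction of M to S − Z) is an elementary split matroid. -/
open Matroid Set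

variable {α : Type*}

theorem stmt4 {α : Type*} (M : Matroid α) (hM : IsElemSplit M) (Z : Set α) :
    IsElemSplit (mdelete M Z) := by
  obtain ⟨q, H, r, rr, hfin, hr, hH, hH2, hind⟩ := hM
  have hE : (mdelete M Z).E = M.E \ Z := by
    simp [mdelete]
  have hfin' : (M.E \ Z).Finite := hfin.diff
  refine ⟨q, fun i => H i ∩ (M.E \ Z), min r ((M.E \ Z).ncard), rr, ?_, ?_, ?_, ?_, ?_⟩
  · rw [hE]; exact hfin'
  · rw [hE]; exact min_le_right _ _
  · intro i; rw [hE]; exact inter_subset_right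
  · intro i j hij
    have h1 : (H i ∩ (M.E \ Z) ∩ (H j ∩ (M.E \ Z))).ncard ≤ (H i ∩ H j).ncard := by
      apply ncard_le_ncard
      · intro x hx; exact ⟨hx.1.1, hx.2.1⟩
      · exact hfin.subset (fun x hx => hH i hx.1)
    calc (H i ∩ (M.E \ Z) ∩ (H j ∩ (M.E \ Z))).ncard + min r ((M.E \ Z).ncard)
        ≤ (H i ∩ H j).ncard + r := add_le_add h1 (min_le_left _ _)
      _ ≤ rr i + rr j := hH2 i j hij
  · intro X hX
    rw [hE] at hX
    have hXE : X ⊆ M.E := hX.trans diff_subset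
    have hXcard : X.ncard ≤ (M.E \ Z).ncard := ncard_le_ncard hX hfin'
    have hXH : ∀ i, X ∩ (H i ∩ (M.E \ Z)) = X ∩ H i := by
      intro i
      ext x
      exact ⟨fun hx => ⟨hx.1, hx.2.1⟩, fun hx => ⟨hx.1, hx.2, hX hx.1⟩⟩
    rw [mdelete, Matroid.restrict_indep_iff, hind X hXE]
    constructor
    · rintro ⟨⟨h1, h2⟩, -⟩
      exact ⟨le_min h1 hXcard, fun i => by rw [hXH i]; exact h2 i⟩
    · rintro ⟨h1, h2⟩
      exact ⟨⟨le_trans h1 (min_le_left _ _), fun i => by rw [← hXH i]; exact h2 i⟩, hX⟩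
end

section
/- The class of elementary split matroids is closed under duality: if M is an elementary split matroid, then its dual M* is an elementary split matroid. Moreover, if M of rank r on S is represented by hyperedges H_1,...,H_q with values r, r_1,...,r_q satisfying (H1) and (H2), then M* is represented by the complements S − H_i with values |S| − r and |S − H_i| − r + r_i. -/
open Matroid Set

variable {α : Type*}

lemma esm_extend {q r : ℕ} {H : Fin q → Set α} {rr : Fin q → ℕ}
    (h1 : ∀ i j : Fin q, i ≠ j → (H i ∩ H j).ncard + r ≤ rr i + rr j)
    (hHfin : ∀ i, (H i).Finite)
    {Z X : Set α} (hZfin : Z.Finite) (hXZ : X ⊆ Z)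
    (hZ1 : r ≤ Z.ncard) (hZ2 : ∀ i, r ≤ (Z \ H i).ncard + rr i)
    (hXr : X.ncard < r) (hXc : ∀ i, (X ∩ H i).ncard ≤ rr i) :
    ∃ e, e ∈ Z ∧ e ∉ X ∧ ∀ i, ((insert e X) ∩ H i).ncard ≤ rr i := by
  have hXfin : X.Finite := hZfin.subset hXZ
  have hkey : ∀ (e : α), e ∉ X → (∀ i, e ∈ H i → (X ∩ H i).ncard < rr i) →
      ∀ i, ((insert e X) ∩ H i).ncard ≤ rr i := by
    intro e heX hlt i
    by_cases hei : e ∈ H i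
    · have hsub : (insert e X) ∩ H i ⊆ insert e (X ∩ H i) := by
        intro x hx
        rcases hx.1 with h | h
        · exact Or.inl h
        · exact Or.inr ⟨h, hx.2⟩
      have := ncard_le_ncard hsub ((hXfin.inter_of_left _).insert e)
      have h2 := ncard_insert_le e (X ∩ H i)
      have := hlt i hei
      omega
    · have : (insert e X) ∩ H i = X ∩ H i := by
        ext x
        simp only [mem_inter_iff, mem_insert_iff]
        constructor
        · rintro ⟨h | h, hx⟩
          · exact absurd (h ▸ hx) hei
          · exact ⟨h, hx⟩
        · exact fun h => ⟨Or.inr h.1, h.2⟩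
      rw [this]; exact hXc i
  by_cases htight : ∃ i, rr i ≤ (X ∩ H i).ncard
  · obtain ⟨i₀, hi₀⟩ := htight
    have hi₀' : (X ∩ H i₀).ncard = rr i₀ := le_antisymm (hXc i₀) hi₀
    have huniq : ∀ j, j ≠ i₀ → (X ∩ H j).ncard < rr j := by
      intro j hj
      by_contra h
      push_neg at h
      have hj' : (X ∩ H j).ncard = rr j := le_antisymm (hXc j) h
      have key := ncard_inter_add_ncard_union (X ∩ H i₀) (X ∩ H j)
        (hXfin.inter_of_left _) (hXfin.inter_of_left _)
      have e1 : (X ∩ H i₀) ∩ (X ∩ H j) = X ∩ (H i₀ ∩ H j) := by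
        ext x; simp only [mem_inter_iff]; tauto
      have e2 : (X ∩ H i₀) ∪ (X ∩ H j) = X ∩ (H i₀ ∪ H j) := by
        ext x; simp only [mem_inter_iff, mem_union]; tauto
      rw [e1, e2] at key
      have c1 : (X ∩ (H i₀ ∩ H j)).ncard ≤ (H i₀ ∩ H j).ncard :=
        ncard_le_ncard inter_subset_right ((hHfin i₀).inter_of_left _)
      have c2 : (X ∩ (H i₀ ∪ H j)).ncard ≤ X.ncard := ncard_le_ncard inter_subset_left hXfin
      have := h1 i₀ j (Ne.symm hj)
      omega
    have hpart : (X \ H i₀).ncard + (X ∩ H i₀).ncard = X.ncard := by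
      rw [← ncard_union_eq disjoint_sdiff_inter (hXfin.diff) (hXfin.inter_of_left _),
        diff_union_inter]
    have hcard : (X \ H i₀).ncard < (Z \ H i₀).ncard := by
      have := hZ2 i₀; omega
    obtain ⟨e, heZ, heX⟩ := exists_mem_notMem_of_ncard_lt_ncard hcard (hXfin.diff)
    have heX' : e ∉ X := fun h => heX ⟨h, heZ.2⟩
    exact ⟨e, heZ.1, heX', hkey e heX' (fun i hei => by
      have hne : i ≠ i₀ := fun h => heZ.2 (h ▸ hei)
      exact huniq i hne)⟩
  · push_neg at htight
    obtain ⟨e, heZ, heX⟩ := exists_mem_notMem_of_ncard_lt_ncard (lt_of_lt_of_le hXr hZ1) hXfin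
    exact ⟨e, heZ, heX, hkey e heX (fun i _ => htight i)⟩

lemma esm_build {q r : ℕ} {H : Fin q → Set α} {rr : Fin q → ℕ}
    (h1 : ∀ i j : Fin q, i ≠ j → (H i ∩ H j).ncard + r ≤ rr i + rr j)
    (hHfin : ∀ i, (H i).Finite)
    {Z : Set α} (hZfin : Z.Finite)
    (hZ1 : r ≤ Z.ncard) (hZ2 : ∀ i, r ≤ (Z \ H i).ncard + rr i) :
    ∃ X, X ⊆ Z ∧ X.ncard = r ∧ ∀ i, (X ∩ H i).ncard ≤ rr i := by
  suffices h : ∀ n, n ≤ r → ∃ X, X ⊆ Z ∧ X.ncard = n ∧ ∀ i, (X ∩ H i).ncard ≤ rr i from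
    h r le_rfl
  intro n
  induction n with
  | zero => exact fun _ => ⟨∅, empty_subset _, ncard_empty _, fun i => by simp⟩
  | succ n ih =>
    intro hn
    obtain ⟨X, hXZ, hXn, hXc⟩ := ih (Nat.le_of_succ_le hn)
    obtain ⟨e, heZ, heX, hec⟩ := esm_extend h1 hHfin hZfin hXZ hZ1 hZ2 (by omega) hXc
    exact ⟨insert e X, insert_subset heZ hXZ,
      by rw [ncard_insert_of_notMem heX (hZfin.subset hXZ)]; omega, hec⟩

theorem stmt5 {α : Type*} (M : Matroid α) (hSfin : M.E.Finite) (q r : ℕ)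
    (H : Fin q → Set α) (rr : Fin q → ℕ)
    (hH : ∀ i, H i ⊆ M.E) (hrS : r ≤ M.E.ncard)
    (h1 : ∀ i j : Fin q, i ≠ j → (H i ∩ H j).ncard + r ≤ rr i + rr j)
    (h2 : ∀ i, r ≤ (M.E \ H i).ncard + rr i)
    (hMI : ∀ X, X ⊆ M.E → (M.Indep X ↔ X.ncard ≤ r ∧ ∀ i, (X ∩ H i).ncard ≤ rr i)) :
    IsElemSplit M✶ ∧
      ∀ X, X ⊆ M.E → (M✶.Indep X ↔ X.ncard ≤ M.E.ncard - r ∧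
        ∀ i, (X ∩ (M.E \ H i)).ncard ≤ (M.E \ H i).ncard + rr i - r) := by
  have hHfin : ∀ i, (H i).Finite := fun i => hSfin.subset (hH i)
  -- every base has cardinality r
  have hbase : ∀ B, M.IsBase B → B.ncard = r := by
    intro B hB
    have hBE : B ⊆ M.E := hB.subset_ground
    obtain ⟨hBr, hBc⟩ := (hMI B hBE).1 hB.indep
    by_contra hne
    have hlt : B.ncard < r := lt_of_le_of_ne hBr hne
    obtain ⟨e, heZ, heX, hec⟩ := esm_extend h1 hHfin hSfin hBE hrS h2 hlt hBc
    have hind : M.Indep (insert e B) := (hMI _ (insert_subset heZ hBE)).2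
      ⟨by rw [ncard_insert_of_notMem heX (hSfin.subset hBE)]; omega, hec⟩
    exact heX ((hB.eq_of_subset_indep hind (subset_insert e B)) ▸ mem_insert e B)
  -- the dual characterization
  have hdual : ∀ X, X ⊆ M.E → (M✶.Indep X ↔ X.ncard ≤ M.E.ncard - r ∧
      ∀ i, (X ∩ (M.E \ H i)).ncard ≤ (M.E \ H i).ncard + rr i - r) := by
    intro Y hYE
    constructor
    · intro hY
      obtain ⟨-, B, hB, hdisj⟩ := dual_indep_iff_exists'.1 hY
      have hBE : B ⊆ M.E := hB.subset_ground
      have hBr : B.ncard = r := hbase B hB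
      have hYB : Y ⊆ M.E \ B := subset_diff.2 ⟨hYE, hdisj⟩
      constructor
      · have h1' := ncard_le_ncard hYB (hSfin.diff)
        have h2' := ncard_diff_add_ncard_of_subset hBE hSfin
        omega
      · intro i
        obtain ⟨-, hBc⟩ := (hMI B hBE).1 hB.indep
        have hsub : Y ∩ (M.E \ H i) ⊆ (M.E \ H i) \ B := by
          intro x hx
          exact ⟨hx.2, (hYB hx.1).2⟩
        have c1 := ncard_le_ncard hsub ((hSfin.diff).diff)
        have c2 : ((M.E \ H i) \ B).ncard + ((M.E \ H i) ∩ B).ncard = (M.E \ H i).ncard := by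
          rw [← ncard_union_eq disjoint_sdiff_inter ((hSfin.diff).diff)
            ((hSfin.diff).inter_of_left _), diff_union_inter]
        have e3 : (M.E \ H i) ∩ B = B \ H i := by
          ext x
          simp only [mem_inter_iff, mem_diff]
          exact ⟨fun h => ⟨h.2, h.1.2⟩, fun h => ⟨⟨hBE h.1, h.2⟩, h.1⟩⟩
        rw [e3] at c2
        have c3 : (B \ H i).ncard + (B ∩ H i).ncard = B.ncard := by
          rw [← ncard_union_eq disjoint_sdiff_inter ((hSfin.subset hBE).diff)
            ((hSfin.subset hBE).inter_of_left _), diff_union_inter]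
        have c4 := hBc i
        omega
    · rintro ⟨hY1, hY2⟩
      set Z := M.E \ Y with hZ
      have hZE : Z ⊆ M.E := diff_subset
      have hZY : Z.ncard + Y.ncard = M.E.ncard := ncard_diff_add_ncard_of_subset hYE hSfin
      have hZ1 : r ≤ Z.ncard := by omega
      have hZ2 : ∀ i, r ≤ (Z \ H i).ncard + rr i := by
        intro i
        have e1 : Z \ H i = (M.E \ H i) \ Y := by
          rw [hZ, diff_diff_comm]
        have e2 : ((M.E \ H i) \ Y).ncard + ((M.E \ H i) ∩ Y).ncard = (M.E \ H i).ncard := by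
          rw [← ncard_union_eq disjoint_sdiff_inter ((hSfin.diff).diff)
            ((hSfin.diff).inter_of_left _), diff_union_inter]
        rw [e1]
        have e3 : (M.E \ H i) ∩ Y = Y ∩ (M.E \ H i) := inter_comm _ _
        rw [e3] at e2
        have := hY2 i
        have := h2 i
        omega
      obtain ⟨X, hXZ, hXr, hXc⟩ := esm_build h1 hHfin (hSfin.subset hZE) hZ1 hZ2
      have hXE : X ⊆ M.E := hXZ.trans hZE
      have hXind : M.Indep X := (hMI X hXE).2 ⟨hXr.le, hXc⟩
      have hXbase : M.IsBase X := hXind.isBase_of_maximal (fun J hJ hXJ => by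
        have hJE : J ⊆ M.E := hJ.subset_ground
        have := ((hMI J hJE).1 hJ).1
        exact eq_of_subset_of_ncard_le hXJ (by omega) (hSfin.subset hJE))
      refine dual_indep_iff_exists'.2 ⟨hYE, X, hXbase, ?_⟩
      exact Disjoint.symm (disjoint_sdiff_left.mono_left hXZ)
  refine ⟨?_, hdual⟩
  refine ⟨q, fun i => M.E \ H i, M.E.ncard - r, fun i => (M.E \ H i).ncard + rr i - r, ?_, ?_, ?_, ?_, ?_⟩
  · simpa using hSfin
  · simp only [dual_ground]; omega
  · intro i; simpa using (diff_subset : M.E \ H i ⊆ M.E)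
  · intro i j hij
    have e1 : (M.E \ H i) ∩ (M.E \ H j) = M.E \ (H i ∪ H j) := by
      rw [diff_inter_diff]
    rw [e1]
    show (M.E \ (H i ∪ H j)).ncard + (M.E.ncard - r) ≤
      ((M.E \ H i).ncard + rr i - r) + ((M.E \ H j).ncard + rr j - r)
    have c1 := ncard_diff_add_ncard_of_subset (hH i) hSfin
    have c2 := ncard_diff_add_ncard_of_subset (hH j) hSfin
    have c3 := ncard_diff_add_ncard_of_subset (union_subset (hH i) (hH j)) hSfin
    have c4 := ncard_union_add_ncard_inter (H i) (H j) (hHfin i) (hHfin j)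
    have := h1 i j hij
    have := h2 i
    have := h2 j
    omega
  · intro X hX
    simp only [dual_ground] at hX ⊢
    exact hdual X hX
end

section
/- The class of elementary split matroids is closed under contraction, and hence under taking minors. -/
open Matroid Set

variable {α : Type*}

/-- If `B₀` is a base of `M` whose trace on `M.E \ P` is a basis of `M.E \ P`, then the trace of
its complement on `P` is a basis of `P` in the dual. -/
lemma aux_dual_basis {M : Matroid α} {B₀ P : Set α} (hE : M.E.Finite) (hP : P ⊆ M.E)
    (hB₀ : M.IsBase B₀) (hQ : M.IsBasis (B₀ ∩ (M.E \ P)) (M.E \ P)) :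
    M✶.IsBasis ((M.E \ B₀) ∩ P) P := by
  have hB₀E := hB₀.subset_ground
  set D := M.E \ B₀ with hDdef
  have hDbase : M✶.IsBase D := by
    rw [dual_isBase_iff (show D ⊆ M.E from diff_subset), diff_diff_cancel_left hB₀E]
    exact hB₀
  have hind : M✶.Indep (D ∩ P) := hDbase.indep.subset inter_subset_left
  refine hind.isBasis_of_forall_insert inter_subset_right ?_
  rintro e ⟨heP, heDP⟩
  rw [dep_iff]
  refine ⟨fun hi => ?_, insert_subset (hP heP) ((inter_subset_right).trans hP)⟩
  have heD : e ∉ D := fun h => heDP ⟨h, heP⟩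
  have heB₀ : e ∈ B₀ := by
    by_contra h
    exact heD ⟨hP heP, h⟩
  obtain ⟨D₂, hD₂, hsub, hsub2⟩ := hi.exists_isBase_subset_union_isBase hDbase
  have hsub2' : D₂ ⊆ insert e D :=
    hsub2.trans (union_subset (insert_subset_insert inter_subset_left) (subset_insert _ _))
  have hDfin : D.Finite := hE.subset diff_subset
  obtain ⟨f, hfD, hfD₂⟩ : ∃ f, f ∈ D ∧ f ∉ D₂ := by
    by_contra h
    push_neg at h
    have hDD₂ : D ⊆ D₂ := h
    have : D₂ = insert e D :=
      subset_antisymm hsub2' (insert_subset (hsub (mem_insert _ _)) hDD₂)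
    have h1 : D₂.ncard = D.ncard := hD₂.ncard_eq_ncard_of_isBase hDbase
    rw [this, ncard_insert_of_notMem heD hDfin] at h1
    omega
  have hfP : f ∉ P := fun hfP => hfD₂ (hsub (mem_insert_of_mem _ ⟨hfD, hfP⟩))
  have hfE : f ∈ M.E := hfD.1
  have hB₂ : M.IsBase (M.E \ D₂) := (dual_isBase_iff'.mp hD₂).1
  have hins : M.Indep (insert f (B₀ ∩ (M.E \ P))) := by
    refine hB₂.indep.subset (insert_subset ⟨hfE, hfD₂⟩ (fun x hx => ⟨hB₀E hx.1, fun hxD₂ => ?_⟩))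
    rcases hsub2' hxD₂ with h | h
    · exact hx.2.2 (h ▸ heP)
    · exact h.2 hx.1
  have hfnot : f ∉ B₀ ∩ (M.E \ P) := fun h => hfD.2 h.1
  exact (hQ.insert_dep ⟨⟨hfE, hfP⟩, hfnot⟩).not_indep hins

/-- Independence of `X ∪ B` does not depend on the choice of the basis `B` of `W`,
provided `X` is disjoint from `W`. -/
lemma aux_indep_union_basis {M : Matroid α} {W B B'' X : Set α} (hE : M.E.Finite)
    (hB : M.IsBasis B W) (hB'' : M.IsBasis B'' W) (hXW : Disjoint X W)
    (h : M.Indep (X ∪ B'')) : M.Indep (X ∪ B) := by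
  have hWE : W ⊆ M.E := hB.subset_ground
  have hXE : X ⊆ M.E := (subset_union_left).trans h.subset_ground
  have hXWE : X ∪ W ⊆ M.E := union_subset hXE hWE
  have hbasis : M.IsBasis (X ∪ B'') (X ∪ W) := by
    refine h.isBasis_of_forall_insert (union_subset_union_right _ hB''.subset) ?_
    rintro e ⟨heXW, heI⟩
    have heW : e ∈ W := heXW.resolve_left (fun h' => heI (mem_union_left _ h'))
    have heB'' : e ∉ B'' := fun h' => heI (mem_union_right _ h')
    rw [dep_iff]
    refine ⟨fun hi => ?_, insert_subset (hWE heW) h.subset_ground⟩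
    exact (hB''.insert_dep ⟨heW, heB''⟩).not_indep
      (hi.subset (insert_subset_insert subset_union_right))
  obtain ⟨J, hJ, hBJ⟩ := hB.indep.subset_isBasis_of_subset ((hB.subset).trans subset_union_right) hXWE
  have hJE : J ⊆ M.E := hJ.indep.subset_ground
  have hJfin : J.Finite := hE.subset hJE
  have hXfin : X.Finite := hE.subset hXE
  have hBfin : B.Finite := hE.subset (hB.subset.trans hWE)
  have hB''fin : B''.Finite := hE.subset (hB''.subset.trans hWE)
  have hJW : J ∩ W = B :=
    (hB.eq_of_subset_indep (hJ.indep.subset inter_subset_left)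
      (subset_inter hBJ hB.subset) inter_subset_right).symm
  have hcard : J.ncard = (X ∪ B'').ncard := by
    have := hJ.encard_eq_encard hbasis
    rw [ncard_def, this, ← ncard_def]
  have hXB'' : (X ∪ B'').ncard = X.ncard + B''.ncard :=
    ncard_union_eq (hXW.mono_right hB''.subset) hXfin hB''fin
  have hBB'' : B.ncard = B''.ncard := by
    have := hB.encard_eq_encard hB''
    rw [ncard_def, this, ← ncard_def]
  have hJsplit : (J ∩ W).ncard + (J \ W).ncard = J.ncard :=
    ncard_inter_add_ncard_diff_eq_ncard _ _ hJfin
  have hJdiff : J \ W ⊆ X := fun x hx => ((hJ.subset hx.1).resolve_right hx.2)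
  have hJWX : J \ W = X := by
    apply eq_of_subset_of_ncard_le hJdiff _ hXfin
    rw [hJW] at hJsplit
    omega
  exact hJ.indep.subset (union_subset (hJWX ▸ diff_subset) hBJ)


/-- Independence in the contraction, in terms of a fixed basis of the contracted set. -/
lemma aux_contract_indep {M : Matroid α} {Z B : Set α} (hE : M.E.Finite)
    (hB : M.IsBasis B (Z ∩ M.E)) (X : Set α) :
    (mcontract M Z).Indep X ↔ X ⊆ M.E \ Z ∧ M.Indep (X ∪ B) := by
  have hNdef : mcontract M Z = (M✶ ↾ (M.E \ Z))✶ := by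
    rw [mcontract, mdelete, dual_ground]
  set R := M.E \ Z with hRdef
  set Z' := Z ∩ M.E with hZ'def
  have hRE : R ⊆ M.E := diff_subset
  have hZ'E : Z' ⊆ M.E := inter_subset_right
  have hZ'c : M.E \ Z' = R := diff_inter_self_eq_diff
  constructor
  · intro hX
    rw [hNdef] at hX
    obtain ⟨hXR, B', hB'base, hdisj⟩ := dual_indep_iff_exists'.mp hX
    rw [restrict_ground_eq] at hXR
    rw [isBase_restrict_iff (show R ⊆ M✶.E from hRE)] at hB'base
    obtain ⟨D, hD, hB'D⟩ := hB'base.indep.exists_isBase_superset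
    have hDR : D ∩ R = B' :=
      (hB'base.eq_of_subset_indep (hD.indep.subset inter_subset_left)
        (subset_inter hB'D hB'base.subset) inter_subset_right).symm
    have hQ : M✶.IsBasis (D ∩ (M✶.E \ Z')) (M✶.E \ Z') := by
      rw [dual_ground, hZ'c, hDR]
      exact hB'base
    have hdb := aux_dual_basis (M := M✶) (by rwa [dual_ground])
      (show Z' ⊆ M✶.E from hZ'E) hD hQ
    rw [dual_dual, dual_ground] at hdb
    set B₀ := M.E \ D with hB₀def
    have hB₀ : M.IsBase B₀ := (dual_isBase_iff'.mp hD).1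
    have hXB₀ : X ⊆ B₀ := fun x hx => ⟨hRE (hXR hx), fun hxD =>
      (disjoint_left.mp hdisj hx) (hDR ▸ ⟨hxD, hXR hx⟩)⟩
    have hind : M.Indep (X ∪ (B₀ ∩ Z')) := hB₀.indep.subset (union_subset hXB₀ inter_subset_left)
    have hdisjXZ' : Disjoint X Z' := disjoint_left.mpr fun x hx hz => (hXR hx).2 hz.1
    exact ⟨hXR, aux_indep_union_basis hE hB hdb hdisjXZ' hind⟩
  · rintro ⟨hXR, hind⟩
    obtain ⟨B₀, hB₀, hsub⟩ := hind.exists_isBase_superset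
    have hBZ : B₀ ∩ Z' = B :=
      (hB.eq_of_subset_indep (hB₀.indep.subset inter_subset_left)
        (subset_inter ((subset_union_right).trans hsub) hB.subset) inter_subset_right).symm
    have hbasisZ : M.IsBasis (B₀ ∩ (M.E \ R)) (M.E \ R) := by
      have hER : M.E \ R = Z' := by
        rw [hRdef, diff_diff_right_self, hZ'def, inter_comm]
      rw [hER, hBZ]
      exact hB
    have hdualbasis := aux_dual_basis hE hRE hB₀ hbasisZ
    rw [hNdef]
    refine dual_indep_iff_exists'.mpr ⟨by rwa [restrict_ground_eq], (M.E \ B₀) ∩ R, ?_, ?_⟩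
    · rw [isBase_restrict_iff (show R ⊆ M✶.E from hRE)]
      exact hdualbasis
    · exact disjoint_left.mpr fun x hx hmem => hmem.1.2 (hsub (mem_union_left _ hx))

/-- Elementary split matroids are closed under deletion. -/
lemma elemSplit_delete {M : Matroid α} (D : Set α) (h : IsElemSplit M) :
    IsElemSplit (mdelete M D) := by
  obtain ⟨q, H, r, rr, hfin, hr, hHE, hH1, hchar⟩ := h
  have hgr : (mdelete M D).E = M.E \ D := rfl
  have hE'fin : (M.E \ D).Finite := hfin.subset diff_subset
  refine ⟨q, fun i => H i ∩ (M.E \ D), min r ((M.E \ D).ncard), rr, ?_, ?_, ?_, ?_, ?_⟩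
  · rw [hgr]; exact hE'fin
  · rw [hgr]; exact min_le_right _ _
  · intro i; rw [hgr]; exact inter_subset_right
  · intro i j hij
    have h1 := hH1 i j hij
    have hmono : ((H i ∩ (M.E \ D)) ∩ (H j ∩ (M.E \ D))).ncard ≤ (H i ∩ H j).ncard :=
      ncard_le_ncard (fun x hx => ⟨hx.1.1, hx.2.1⟩)
        (hfin.subset ((inter_subset_left).trans (hHE i)))
    have hmin := min_le_left r ((M.E \ D).ncard)
    beta_reduce
    omega
  · intro X hX
    rw [hgr] at hX
    have hXE : X ⊆ M.E := hX.trans diff_subset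
    rw [mdelete, restrict_indep_iff, and_iff_left hX, hchar X hXE]
    have hXcard : X.ncard ≤ (M.E \ D).ncard := ncard_le_ncard hX hE'fin
    have hint : ∀ i, X ∩ (H i ∩ (M.E \ D)) = X ∩ H i := fun i =>
      Set.ext fun x => by
        simp only [mem_inter_iff]
        exact ⟨fun ⟨a, b, _⟩ => ⟨a, b⟩, fun ⟨a, b⟩ => ⟨a, b, hX a⟩⟩
    constructor
    · rintro ⟨h1, h2⟩
      exact ⟨le_min h1 hXcard, fun i => by rw [hint i]; exact h2 i⟩
    · rintro ⟨h1, h2⟩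
      refine ⟨le_trans h1 (min_le_left _ _), fun i => ?_⟩
      have := h2 i; rwa [hint i] at this

/-- Elementary split matroids are closed under contraction. -/
lemma elemSplit_contract {M : Matroid α} (Z : Set α) (h : IsElemSplit M) :
    IsElemSplit (mcontract M Z) := by
  obtain ⟨q, H, r, rr, hfin, hr, hHE, hH1, hchar⟩ := h
  obtain ⟨B, hB⟩ := M.exists_isBasis (Z ∩ M.E) inter_subset_right
  have hBZ : B ⊆ Z ∩ M.E := hB.subset
  have hBE : B ⊆ M.E := hBZ.trans inter_subset_right
  have hBfin : B.Finite := hfin.subset hBE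
  have hBcards := (hchar B hBE).mp hB.indep
  have hgr : (mcontract M Z).E = M.E \ Z := rfl
  have hE'fin : (M.E \ Z).Finite := hfin.subset diff_subset
  refine ⟨q, fun i => H i \ Z, min (r - B.ncard) ((M.E \ Z).ncard),
    fun i => rr i - (B ∩ H i).ncard, ?_, ?_, ?_, ?_, ?_⟩
  · rw [hgr]; exact hE'fin
  · rw [hgr]; exact min_le_right _ _
  · intro i; rw [hgr]; exact diff_subset_diff_left (hHE i)
  · intro i j hij
    have h1 := hH1 i j hij
    have hfinHij : (H i ∩ H j).Finite := hfin.subset ((inter_subset_left).trans (hHE i))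
    have f3 : ((H i ∩ H j) ∩ Z).ncard + ((H i ∩ H j) \ Z).ncard = (H i ∩ H j).ncard :=
      ncard_inter_add_ncard_diff_eq_ncard _ _ hfinHij
    have f2 : (B ∩ H i).ncard + (B ∩ H j).ncard ≤ B.ncard + ((H i ∩ H j) ∩ Z).ncard := by
      have hu : ((B ∩ H i) ∩ (B ∩ H j)).ncard + ((B ∩ H i) ∪ (B ∩ H j)).ncard
          = (B ∩ H i).ncard + (B ∩ H j).ncard :=
        ncard_inter_add_ncard_union _ _ (hBfin.subset inter_subset_left)
          (hBfin.subset inter_subset_left)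
      have h5 : ((B ∩ H i) ∪ (B ∩ H j)).ncard ≤ B.ncard :=
        ncard_le_ncard (union_subset inter_subset_left inter_subset_left) hBfin
      have h6 : ((B ∩ H i) ∩ (B ∩ H j)).ncard ≤ ((H i ∩ H j) ∩ Z).ncard :=
        ncard_le_ncard (fun x hx => ⟨⟨hx.1.2, hx.2.2⟩, (hBZ hx.1.1).1⟩)
          (hfinHij.subset inter_subset_left)
      omega
    have hseteq : (H i \ Z) ∩ (H j \ Z) = (H i ∩ H j) \ Z := by
      ext x
      simp only [mem_inter_iff, mem_diff]
      tauto
    rw [hseteq]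
    have hmin := min_le_left (r - B.ncard) ((M.E \ Z).ncard)
    have hbi := hBcards.2 i
    have hbj := hBcards.2 j
    have hbr := hBcards.1
    beta_reduce
    omega
  · intro X hX
    rw [hgr] at hX
    rw [aux_contract_indep hfin hB X, and_iff_right hX]
    have hXE : X ⊆ M.E := hX.trans diff_subset
    have hXfin : X.Finite := hfin.subset hXE
    have hXZ : Disjoint X Z := disjoint_left.mpr fun x hx => (hX hx).2
    have hXB : Disjoint X B := hXZ.mono_right (hBZ.trans inter_subset_left)
    have hXBE : X ∪ B ⊆ M.E := union_subset hXE hBE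
    rw [hchar _ hXBE]
    have hcard : (X ∪ B).ncard = X.ncard + B.ncard := ncard_union_eq hXB hXfin hBfin
    have hintcard : ∀ i, ((X ∪ B) ∩ H i).ncard = (X ∩ H i).ncard + (B ∩ H i).ncard := by
      intro i
      rw [union_inter_distrib_right]
      exact ncard_union_eq (hXB.mono inter_subset_left inter_subset_left)
        (hXfin.subset inter_subset_left) (hBfin.subset inter_subset_left)
    have hint2 : ∀ i, X ∩ (H i \ Z) = X ∩ H i := fun i => by
      ext x
      simp only [mem_inter_iff, mem_diff]
      exact ⟨fun ⟨a, b, _⟩ => ⟨a, b⟩, fun ⟨a, b⟩ => ⟨a, b, fun hz => (hX a).2 hz⟩⟩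
    have hXcard : X.ncard ≤ (M.E \ Z).ncard := ncard_le_ncard hX hE'fin
    have hbr := hBcards.1
    constructor
    · rintro ⟨h1, h2⟩
      rw [hcard] at h1
      refine ⟨le_min (by omega) hXcard, fun i => ?_⟩
      have := h2 i
      rw [hintcard i] at this
      rw [hint2 i]
      beta_reduce
      omega
    · rintro ⟨h1, h2⟩
      have h1' : X.ncard ≤ r - B.ncard := le_trans h1 (min_le_left _ _)
      refine ⟨by rw [hcard]; omega, fun i => ?_⟩
      have := h2 i
      rw [hint2 i] at this
      beta_reduce at this
      have hbi := hBcards.2 i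
      rw [hintcard i]
      omega

theorem stmt6 {α : Type*} :
    (∀ (M : Matroid α) (Z : Set α), IsElemSplit M → IsElemSplit (mcontract M Z)) ∧
    (∀ M N : Matroid α, IsElemSplit M → IsMinorOf N M → IsElemSplit N) := by
  refine ⟨fun M Z h => elemSplit_contract Z h, ?_⟩
  rintro M N hM ⟨C, D, rfl⟩
  exact elemSplit_delete D (elemSplit_contract C hM)
end

section
/- If an elementary split matroid M is given by a representation H_1,...,H_q, r, r_1,...,r_q satisfying (H1)–(H4), then the restriction M|H_i is isomorphic to the uniform matroid U_{r_i, |H_i|} for each i. -/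
open Matroid Set

variable {α : Type*}

theorem stmt7 {α : Type*} (M : Matroid α) (hSfin : M.E.Finite) (q r : ℕ)
    (H : Fin q → Set α) (rr : Fin q → ℕ)
    (hH : ∀ i, H i ⊆ M.E) (hrS : r ≤ M.E.ncard)
    (h1 : ∀ i j : Fin q, i ≠ j → (H i ∩ H j).ncard + r ≤ rr i + rr j)
    (h2 : ∀ i, r ≤ (M.E \ H i).ncard + rr i)
    (h3 : ∀ i, rr i + 1 ≤ r)
    (h4 : ∀ i, rr i + 1 ≤ (H i).ncard)
    (hMI : ∀ X, X ⊆ M.E → (M.Indep X ↔ X.ncard ≤ r ∧ ∀ i, (X ∩ H i).ncard ≤ rr i)) :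
    ∀ i, IsUnif (M ↾ (H i)) (rr i) ((H i).ncard) := by
  intro i
  have hfin : (H i).Finite := hSfin.subset (hH i)
  refine ⟨hfin, rfl, ?_⟩
  intro I hI
  simp only [Matroid.restrict_ground_eq] at hI
  rw [Matroid.restrict_indep_iff]
  constructor
  · rintro ⟨hInd, hIH⟩
    rw [hMI I (hIH.trans (hH i))] at hInd
    have := hInd.2 i
    rwa [Set.inter_eq_self_of_subset_left hIH] at this
  · intro hcard
    refine ⟨?_, hI⟩
    rw [hMI I (hI.trans (hH i))]
    refine ⟨hcard.trans (Nat.le_of_succ_le (h3 i)), fun j => ?_⟩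
    by_cases hji : j = i
    · subst hji
      exact le_trans (Set.ncard_le_ncard Set.inter_subset_left (hfin.subset hI)) hcard
    · have hsub : I ∩ H j ⊆ H i ∩ H j := Set.inter_subset_inter_left _ hI
      have hle : (I ∩ H j).ncard ≤ (H i ∩ H j).ncard :=
        Set.ncard_le_ncard hsub (hfin.inter_of_left _)
      have := h1 i j (fun h => hji h.symm)
      have := h3 i
      omega
end

section
/- If an elementary split matroid M is given by a non-redundant representation H_1,...,H_q, r, r_1,...,r_q satisfying (H1)–(H4), then the contraction M/H_i is isomorphic to the uniform matroid U_{r−r_i, |S−H_i|} for each i. -/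
open Matroid Set

variable {α : Type*}

theorem stmt8 {α : Type*} (M : Matroid α) (hSfin : M.E.Finite) (q r : ℕ)
    (H : Fin q → Set α) (rr : Fin q → ℕ)
    (hH : ∀ i, H i ⊆ M.E) (hrS : r ≤ M.E.ncard)
    (h1 : ∀ i j : Fin q, i ≠ j → (H i ∩ H j).ncard + r ≤ rr i + rr j)
    (h2 : ∀ i, r ≤ (M.E \ H i).ncard + rr i)
    (h3 : ∀ i, rr i + 1 ≤ r)
    (h4 : ∀ i, rr i + 1 ≤ (H i).ncard)
    (hMI : ∀ X, X ⊆ M.E → (M.Indep X ↔ X.ncard ≤ r ∧ ∀ i, (X ∩ H i).ncard ≤ rr i)) :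
    ∀ i, IsUnif (mcontract M (H i)) (r - rr i) ((M.E \ H i).ncard) := by
  intro i
  set F := M.E \ H i with hF
  have hFE : F ⊆ M.E := Set.diff_subset
  have hFfin : F.Finite := hSfin.subset hFE
  set k := r - rr i with hk
  have hkr : rr i + k = r := by have := h3 i; omega
  have hFk : k ≤ F.ncard := by have := h2 i; rw [← hF] at this; omega
  -- L1 : small unions are independent
  have L1 : ∀ A T : Set α, A ⊆ H i → A.ncard ≤ rr i → T ⊆ F → T.ncard ≤ k →
      M.Indep (A ∪ T) := by
    intro A T hA hAc hT hTc
    have hAE : A ⊆ M.E := hA.trans (hH i)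
    have hTE : T ⊆ M.E := hT.trans hFE
    have hAfin : A.Finite := hSfin.subset hAE
    have hTfin : T.Finite := hSfin.subset hTE
    rw [hMI _ (Set.union_subset hAE hTE)]
    constructor
    · have := Set.ncard_union_le A T
      omega
    · intro j
      by_cases hji : j = i
      · subst hji
        have hsub : (A ∪ T) ∩ H j ⊆ A := by
          rintro x ⟨hx1 | hx1, hx2⟩
          · exact hx1
          · exact absurd hx2 (hT hx1).2
        have := Set.ncard_le_ncard hsub hAfin
        omega
      · have h1' := h1 i j (fun h => hji h.symm)
        have hsub : (A ∪ T) ∩ H j ⊆ (H i ∩ H j) ∪ T := by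
          rintro x ⟨hx1 | hx1, hx2⟩
          · exact Or.inl ⟨hA hx1, hx2⟩
          · exact Or.inr hx1
        have h5 := Set.ncard_le_ncard hsub (((hSfin.subset (hH i)).inter_of_left _).union hTfin)
        have h6 := Set.ncard_union_le (H i ∩ H j) T
        omega
  -- L2 : bases of size r avoiding any B ⊆ F with k ≤ |F \ B|
  have L2 : ∀ B : Set α, B ⊆ F → k ≤ (F \ B).ncard →
      ∃ W, M.IsBase W ∧ Disjoint B W ∧ W.ncard = r := by
    intro B hB hBk
    obtain ⟨A, hAsub, hAcard⟩ := Set.exists_subset_card_eq (show rr i ≤ (H i).ncard by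
      have := h4 i; omega)
    obtain ⟨T, hTsub, hTcard⟩ := Set.exists_subset_card_eq hBk
    have hTF : T ⊆ F := hTsub.trans Set.diff_subset
    have hWi : M.Indep (A ∪ T) := L1 A T hAsub hAcard.le hTF hTcard.le
    have hATdisj : Disjoint A T := by
      refine Set.disjoint_left.mpr fun x hx hxT => ?_
      exact (hTF hxT).2 (hAsub hx)
    have hWcard : (A ∪ T).ncard = r := by
      rw [Set.ncard_union_eq hATdisj (hSfin.subset (hAsub.trans (hH i)))
        (hFfin.subset hTF)]
      omega
    refine ⟨A ∪ T, hWi.isBase_of_maximal fun J hJ hWJ => ?_, ?_, hWcard⟩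
    · have hJE : J ⊆ M.E := hJ.subset_ground
      have hJr : J.ncard ≤ r := ((hMI J hJE).mp hJ).1
      exact Set.eq_of_subset_of_ncard_le hWJ (by omega) (hSfin.subset hJE)
    · refine Set.disjoint_left.mpr fun x hx => ?_
      rintro (hxA | hxT)
      · exact (hB hx).2 (hAsub hxA)
      · exact (hTsub hxT).2 hx
  -- all bases have size r
  obtain ⟨W0, hW0, -, hW0card⟩ := L2 ∅ (Set.empty_subset F) (by
    rw [Set.diff_empty]; exact hFk)
  have hrank : ∀ W, M.IsBase W → W.ncard = r := fun W hW => by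
    rw [hW.ncard_eq_ncard_of_isBase hW0, hW0card]
  -- L3 : every base meets F in at least k elements
  have L3 : ∀ W, M.IsBase W → k ≤ (W ∩ F).ncard := by
    intro W hW
    have hWE : W ⊆ M.E := hW.subset_ground
    have hWfin : W.Finite := hSfin.subset hWE
    have hWHi : (W ∩ H i).ncard ≤ rr i := ((hMI W hWE).mp hW.indep).2 i
    have hWsub : W ⊆ (W ∩ H i) ∪ (W ∩ F) := by
      intro x hx
      by_cases hxH : x ∈ H i
      · exact Or.inl ⟨hx, hxH⟩
      · exact Or.inr ⟨hx, hWE hx, hxH⟩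
    have h5 := Set.ncard_le_ncard hWsub ((hWfin.inter_of_left _).union (hWfin.inter_of_left _))
    have h6 := Set.ncard_union_le (W ∩ H i) (W ∩ F)
    have h7 := hrank W hW
    omega
  -- L5 : B ⊆ F with k ≤ |F \ B| is dual-independent
  have L5 : ∀ B : Set α, B ⊆ F → k ≤ (F \ B).ncard → M✶.Indep B := by
    intro B hB hBk
    obtain ⟨W, hW, hdisj, -⟩ := L2 B hB hBk
    exact (M.dual_indep_iff_exists (hB.trans hFE)).mpr ⟨W, hW, hdisj⟩
  -- L4 : dual-independent subsets of F leave at least k elements of F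
  have L4 : ∀ B : Set α, B ⊆ F → M✶.Indep B → k ≤ (F \ B).ncard := by
    intro B hB hBi
    obtain ⟨-, W, hW, hdisj⟩ := (Matroid.dual_indep_iff_exists').mp hBi
    have hsub : W ∩ F ⊆ F \ B := by
      rintro x ⟨hxW, hxF⟩
      exact ⟨hxF, fun hxB => (Set.disjoint_left.mp hdisj hxB) hxW⟩
    exact le_trans (L3 W hW) (Set.ncard_le_ncard hsub hFfin.diff)
  -- the contraction, concretely
  have hceq : mcontract M (H i) = (M✶ ↾ F)✶ := rfl
  have hE : (mcontract M (H i)).E = F := rfl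
  refine ⟨hE ▸ hFfin, by rw [hE], ?_⟩
  intro I hI
  rw [hE] at hI
  have hIfin : I.Finite := hFfin.subset hI
  rw [hceq]
  rw [Matroid.dual_indep_iff_exists']
  have hFgr : F ⊆ M✶.E := hFE
  constructor
  · rintro ⟨-, B, hBbase, hdisj⟩
    rw [Matroid.isBase_restrict_iff hFgr] at hBbase
    have hBF : B ⊆ F := hBbase.subset
    have hBind : M✶.Indep B := hBbase.indep
    -- |F \ B| ≤ k by maximality
    have hFB : (F \ B).ncard ≤ k := by
      by_contra hcon
      push_neg at hcon
      have hne : (F \ B).Nonempty := by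
        rw [Set.nonempty_iff_ne_empty]
        intro h
        rw [h, Set.ncard_empty] at hcon; omega
      obtain ⟨x, hxF, hxB⟩ := hne
      have hB' : insert x B ⊆ F := Set.insert_subset hxF hBF
      have hcard : k ≤ (F \ insert x B).ncard := by
        have : F \ insert x B = (F \ B) \ {x} := by
          ext y; simp [Set.mem_diff, Set.mem_insert_iff]; tauto
        rw [this, Set.ncard_diff_singleton_of_mem (show x ∈ F \ B from ⟨hxF, hxB⟩)]
        omega
      have hBi' : M✶.Indep (insert x B) := L5 _ hB' hcard
      have := hBbase.eq_of_subset_indep hBi' (Set.subset_insert x B) hB'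
      exact hxB (this ▸ (Set.mem_insert x B))
    have hIsub : I ⊆ F \ B := fun x hx =>
      ⟨hI hx, fun hxB => (Set.disjoint_left.mp hdisj hx) hxB⟩
    have := Set.ncard_le_ncard hIsub hFfin.diff
    omega
  · intro hIk
    refine ⟨hI, ?_⟩
    have hFI : F.ncard - k ≤ (F \ I).ncard := by
      have := Set.ncard_diff hI (hs := hIfin)
      have := Set.ncard_le_ncard hI hFfin
      omega
    obtain ⟨B, hBsub, hBcard⟩ := Set.exists_subset_card_eq hFI
    have hBF : B ⊆ F := hBsub.trans Set.diff_subset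
    have hBk : k ≤ (F \ B).ncard := by
      have := Set.ncard_diff hBF (hs := hFfin.subset hBF)
      omega
    have hBind : M✶.Indep B := L5 B hBF hBk
    refine ⟨B, (Matroid.isBase_restrict_iff hFgr).mpr ?_, ?_⟩
    · refine hBind.isBasis_of_maximal_subset hBF (fun J hJ hBJ hJF => ?_) hFgr
      have hJk := L4 J hJF hJ
      have h6 := Set.ncard_diff hJF (hs := hFfin.subset hJF)
      have h7 := Set.ncard_le_ncard hJF hFfin
      have : J.ncard ≤ B.ncard := by omega
      exact (Set.eq_of_subset_of_ncard_le hBJ this (hFfin.subset hJF)) ▸ Set.Subset.rfl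
    · exact Set.disjoint_left.mpr fun x hx hxB => (hBsub hxB).2 hx
end

section
/- The matroid U_{0,1} ⊕ U_{1,2} ⊕ U_{1,1} is not an elementary split matroid. -/
open Matroid Set

variable {α : Type*}

theorem stmt10 {α : Type*} (M : Matroid α) (h : IsU01U12U11 M) : ¬ IsElemSplit M := by
  obtain ⟨a, b, c, d, hnd, hE, hInd⟩ := h
  simp only [List.nodup_cons, List.mem_cons, List.not_mem_nil, or_false,
    List.mem_singleton, not_or, List.nodup_nil, and_true] at hnd
  obtain ⟨⟨hab, hac, had⟩, ⟨hbc, hbd⟩, hcd⟩ := hnd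
  rintro ⟨q, H, r, rr, hfin, hrE, hHsub, hH1, hspec⟩
  have hbdE : ({b, d} : Set α) ⊆ M.E := by rw [hE]; intro x hx; simp at hx ⊢; tauto
  have hcdE : ({c, d} : Set α) ⊆ M.E := by rw [hE]; intro x hx; simp at hx ⊢; tauto
  have haE : ({a} : Set α) ⊆ M.E := by rw [hE]; intro x hx; simp at hx ⊢; tauto
  have hbcE : ({b, c} : Set α) ⊆ M.E := by rw [hE]; intro x hx; simp at hx ⊢; tauto
  -- {b,d} is independent
  have hbd_ind : M.Indep {b, d} := by
    rw [hInd _ hbdE]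
    refine ⟨by simp; tauto, fun hsub => ?_⟩
    have : c ∈ ({b, d} : Set α) := hsub (by simp)
    simp at this; tauto
  have hcd_ind : M.Indep {c, d} := by
    rw [hInd _ hcdE]
    refine ⟨by simp; tauto, fun hsub => ?_⟩
    have : b ∈ ({c, d} : Set α) := hsub (by simp)
    simp at this; tauto
  have ha_dep : ¬ M.Indep {a} := by
    rw [hInd _ haE]; rintro ⟨h1, -⟩; exact h1 rfl
  have hbc_dep : ¬ M.Indep {b, c} := by
    rw [hInd _ hbcE]; rintro ⟨-, h2⟩; exact h2 subset_rfl
  -- r ≥ 2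
  have hbd2 : ({b, d} : Set α).ncard = 2 := Set.ncard_pair hbd
  obtain ⟨hbdr, hbdH⟩ := (hspec _ hbdE).mp hbd_ind
  have hr2 : 2 ≤ r := hbd2 ▸ hbdr
  obtain ⟨-, hcdH⟩ := (hspec _ hcdE).mp hcd_ind
  -- index i with rr i = 0
  rw [hspec _ haE] at ha_dep
  push_neg at ha_dep
  obtain ⟨i, hi⟩ := ha_dep (by rw [Set.ncard_singleton]; omega)
  have hi1 : (({a} : Set α) ∩ H i).ncard ≤ 1 := by
    calc (({a} : Set α) ∩ H i).ncard ≤ ({a} : Set α).ncard :=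
          Set.ncard_le_ncard Set.inter_subset_left (Set.toFinite _)
      _ = 1 := Set.ncard_singleton a
  have hrri : rr i = 0 := by omega
  -- index j with rr j = 1
  rw [hspec _ hbcE] at hbc_dep
  push_neg at hbc_dep
  obtain ⟨j, hj⟩ := hbc_dep (by rw [Set.ncard_pair hbc]; omega)
  have hj2 : (({b, c} : Set α) ∩ H j).ncard ≤ 2 := by
    calc (({b, c} : Set α) ∩ H j).ncard ≤ ({b, c} : Set α).ncard :=
          Set.ncard_le_ncard Set.inter_subset_left (Set.toFinite _)
      _ = 2 := Set.ncard_pair hbc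
  have hne : (({b, c} : Set α) ∩ H j).Nonempty := by
    rw [← Set.ncard_pos ((Set.toFinite _).inter_of_left _)]; omega
  obtain ⟨x, hx1, hx2⟩ := hne
  have hx1' : x = b ∨ x = c := by simpa using hx1
  have hrrj_ge : 1 ≤ rr j := by
    rcases hx1' with h1 | h1
    · have hpos : 0 < (({b, d} : Set α) ∩ H j).ncard := by
        rw [Set.ncard_pos ((Set.toFinite _).inter_of_left _)]
        exact ⟨b, by simp, h1 ▸ hx2⟩
      exact le_trans hpos (hbdH j)
    · have hpos : 0 < (({c, d} : Set α) ∩ H j).ncard := by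
        rw [Set.ncard_pos ((Set.toFinite _).inter_of_left _)]
        exact ⟨c, by simp, h1 ▸ hx2⟩
      exact le_trans hpos (hcdH j)
  have hij : i ≠ j := by intro hEq; rw [hEq] at hrri; omega
  have := hH1 i j hij
  omega
end

section
/- A matroid M has no minor isomorphic to U_{0,1} ⊕ U_{1,2} ⊕ U_{1,1} if and only if M is an elementary split matroid. -/
open Matroid Set

variable {α : Type*}

namespace ElemSplitProof


variable {M : Matroid α} {I J X Y C B : Set α} {e : α}

/-- rank of a set, via a chosen `Basis'`. -/
noncomputable def rnk (M : Matroid α) (X : Set α) : ℕ := (M.exists_isBasis' X).choose.ncard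

lemma rnk_eq (hI : M.IsBasis' I X) : rnk M X = I.ncard :=
  IsBase.ncard_eq_ncard_of_isBase (isBase_restrict_iff'.2 (M.exists_isBasis' X).choose_spec)
    (isBase_restrict_iff'.2 hI)

lemma indep_le_rnk (hI : M.Indep I) (hIX : I ⊆ X) (hfin : (X ∩ M.E).Finite) :
    I.ncard ≤ rnk M X := by
  obtain ⟨J, hJ, hIJ⟩ := hI.subset_isBasis'_of_subset hIX
  rw [rnk_eq hJ]
  exact ncard_le_ncard hIJ (hfin.subset (subset_inter hJ.subset hJ.indep.subset_ground))

lemma rnk_le_ncard (hfin : X.Finite) : rnk M X ≤ X.ncard := by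
  obtain ⟨I, hI⟩ := M.exists_isBasis' X
  rw [rnk_eq hI]
  exact ncard_le_ncard hI.subset hfin

lemma rnk_indep (hI : M.Indep I) : rnk M I = I.ncard := by
  have hb : M.IsBasis' I I := ⟨⟨hI, subset_rfl⟩, fun Y hY _ => hY.2⟩
  exact rnk_eq hb

lemma rnk_closure_eq (M : Matroid α) (X : Set α) : rnk M (M.closure X) = rnk M X := by
  obtain ⟨I, hI⟩ := M.exists_isBasis' X
  rw [rnk_eq hI.isBasis_closure_right.isBasis', rnk_eq hI]

lemma rnk_le_of_subset_closure (hE : M.E.Finite) (h : X ⊆ M.closure Y) :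
    rnk M X ≤ rnk M Y := by
  obtain ⟨I, hI⟩ := M.exists_isBasis' X
  rw [rnk_eq hI, ← rnk_closure_eq M Y]
  exact indep_le_rnk hI.indep (hI.subset.trans h)
    (hE.subset (inter_subset_left.trans (M.closure_subset_ground Y)))

lemma rnk_mono (hE : M.E.Finite) (h : X ⊆ Y) : rnk M X ≤ rnk M Y := by
  obtain ⟨I, hI⟩ := M.exists_isBasis' X
  rw [rnk_eq hI]
  exact indep_le_rnk hI.indep (hI.subset.trans h) (hE.subset inter_subset_right)

lemma spanning_rnk (hE : M.E.Finite) (h : M.E ⊆ M.closure X) : rnk M X = rnk M M.E := by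
  refine le_antisymm ?_ (rnk_le_of_subset_closure hE h)
  obtain ⟨I, hI⟩ := M.exists_isBasis' X
  rw [rnk_eq hI]
  exact indep_le_rnk hI.indep hI.indep.subset_ground (hE.subset inter_subset_right)

lemma exists_not_mem_closure (hE : M.E.Finite) (h : rnk M X < rnk M M.E) :
    ∃ d ∈ M.E, d ∉ M.closure X := by
  by_contra hcon
  push_neg at hcon
  rw [spanning_rnk hE hcon] at h
  exact lt_irrefl _ h

lemma submod (hE : M.E.Finite) (hX : X ⊆ M.E) (hY : Y ⊆ M.E) :
    rnk M (X ∪ Y) + rnk M (X ∩ Y) ≤ rnk M X + rnk M Y := by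
  obtain ⟨I, hI⟩ := M.exists_isBasis' (X ∩ Y)
  obtain ⟨B, hB, hIB⟩ := hI.indep.subset_isBasis'_of_subset (hI.subset.trans inter_subset_left
    |>.trans subset_union_left)
  have hBfin : B.Finite := hE.subset hB.indep.subset_ground
  have hBXY : B ⊆ X ∪ Y := hB.subset
  have hint : B ∩ (X ∩ Y) = I := by
    refine (hI.eq_of_subset_indep (hB.indep.subset inter_subset_left)
      (subset_inter hIB (hI.subset)) inter_subset_right).symm
  have hcup : (B ∩ X) ∪ (B ∩ Y) = B := by
    rw [← inter_union_distrib_left]; exact inter_eq_self_of_subset_left hBXY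
  have hcap : (B ∩ X) ∩ (B ∩ Y) = I := by
    rw [inter_inter_inter_comm, inter_self, hint]
  have hcard : B.ncard + I.ncard = (B ∩ X).ncard + (B ∩ Y).ncard := by
    conv_lhs => rw [← hcup, ← hcap]
    exact ncard_union_add_ncard_inter _ _ (hBfin.subset inter_subset_left)
      (hBfin.subset inter_subset_left)
  rw [rnk_eq hB, rnk_eq hI, hcard]
  gcongr
  · exact indep_le_rnk (hB.indep.subset inter_subset_left) inter_subset_right
      (hE.subset inter_subset_right)
  · exact indep_le_rnk (hB.indep.subset inter_subset_left) inter_subset_right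
      (hE.subset inter_subset_right)

lemma exists_min_dep (hfin : X.Finite) (hX : M.Dep X) :
    ∃ C, C ⊆ X ∧ M.Dep C ∧ ∀ e ∈ C, M.Indep (C \ {e}) := by
  classical
  have hS : {Y | Y ⊆ X ∧ M.Dep Y}.Finite := hfin.finite_subsets.subset (fun Y hY => hY.1)
  obtain ⟨C, hCmem, hCmin⟩ := Set.exists_min_image _ Set.ncard hS ⟨X, subset_rfl, hX⟩
  refine ⟨C, hCmem.1, hCmem.2, fun e he => ?_⟩
  by_contra hdep
  have hCE : C ⊆ M.E := hCmem.2.subset_ground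
  have hdep' : M.Dep (C \ {e}) := dep_of_not_indep hdep (diff_subset.trans hCE)
  have := hCmin (C \ {e}) ⟨diff_subset.trans hCmem.1, hdep'⟩
  have hlt : (C \ {e}).ncard < C.ncard :=
    ncard_diff_singleton_lt_of_mem he (hfin.subset hCmem.1)
  omega

lemma min_dep_closure (hC : M.Dep C) (hmin : ∀ e ∈ C, M.Indep (C \ {e})) (he : e ∈ C) :
    e ∈ M.closure (C \ {e}) := by
  have h1 := (hmin e he).insert_dep_iff (e := e)
  rw [insert_diff_singleton, insert_eq_self.2 he] at h1
  exact (h1.1 hC).1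

lemma min_dep_basis' (hC : M.Dep C) (hmin : ∀ e ∈ C, M.Indep (C \ {e})) (he : e ∈ C) :
    M.IsBasis' (C \ {e}) C := by
  refine ⟨⟨hmin e he, diff_subset⟩, fun J hJ hsub => ?_⟩
  intro x hx
  refine ⟨hJ.2 hx, ?_⟩
  rintro rfl
  have : C ⊆ J := by
    intro y hy
    rcases eq_or_ne y x with rfl | hne
    · exact hx
    · exact hsub ⟨hy, hne⟩
  exact hC.not_indep (hJ.1.subset ((this.antisymm hJ.2).symm ▸ subset_rfl))


section Contract

lemma mcontract_ground (M : Matroid α) (C : Set α) : (mcontract M C).E = M.E \ C := by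
  simp [mcontract, mdelete]

lemma mdelete_indep_iff {D : Set α} : (mdelete M D).Indep I ↔ M.Indep I ∧ I ⊆ M.E \ D := by
  simp [mdelete]

lemma mcontract_inter_ground (M : Matroid α) (C : Set α) :
    mcontract M C = mcontract M (C ∩ M.E) := by
  have h : M✶.E \ C = M✶.E \ (C ∩ M.E) := by
    simp only [dual_ground, diff_inter_self_eq_diff]
  simp only [mcontract, mdelete, h]

lemma closure_union_basis' (hI₀ : M.IsBasis' I₀ C) (Z : Set α) :
    M.closure (Z ∪ I₀) = M.closure (Z ∪ C) := by
  rw [← closure_union_closure_right_eq, hI₀.closure_eq_closure,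
    closure_union_closure_right_eq]

lemma factD1 {A B' I₀ : Set α} (hC : C ⊆ M.E) (hA : A = M.E \ C) (hI₀ : M.IsBasis' I₀ C)
    (hB' : B' ⊆ A) (h : M✶.IsBasis' (A \ B') A) : M.IsBase (B' ∪ I₀) := by
  obtain ⟨hAB'E, B₁, hB₁, hdisj⟩ := dual_indep_iff_exists'.1 h.indep
  have hAE : A ⊆ M.E := by rw [hA]; exact diff_subset
  have hspan : M.E ⊆ M.closure (B' ∪ I₀) := by
    rw [closure_union_basis' hI₀]
    have hB₁sub : B₁ ⊆ B' ∪ C := by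
      intro x hx
      have hxE : x ∈ M.E := hB₁.subset_ground hx
      by_cases hxC : x ∈ C
      · exact Or.inr hxC
      · have hxA : x ∈ A := by rw [hA]; exact ⟨hxE, hxC⟩
        by_contra hx'
        have : x ∈ A \ B' := ⟨hxA, fun h' => hx' (Or.inl h')⟩
        exact (disjoint_right.1 hdisj hx) this
    calc M.E = M.closure B₁ := hB₁.closure_eq.symm
    _ ⊆ M.closure (B' ∪ C) := M.closure_subset_closure hB₁sub
  refine Indep.isBase_of_ground_subset_closure ?_ hspan
  by_contra hdep
  obtain ⟨K, hK, hI₀K⟩ := hI₀.indep.subset_isBasis'_of_subset (subset_union_right (s := B'))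
  have hKne : K ≠ B' ∪ I₀ := by rintro rfl; exact hdep hK.indep
  obtain ⟨e, heBI, heK⟩ : ∃ e, e ∈ (B' ∪ I₀) ∧ e ∉ K := by
    by_contra hcon; push_neg at hcon
    exact hKne (hK.subset.antisymm hcon)
  have heB' : e ∈ B' := heBI.elim id (fun h' => absurd (hI₀K h') heK)
  have hKbase : M.IsBase K := by
    refine hK.indep.isBase_of_ground_subset_closure ?_
    rw [hK.closure_eq_closure]
    exact hspan
  have hJindep : M✶.Indep ((A \ B') ∪ {e}) := by
    rw [dual_indep_iff_exists']
    refine ⟨union_subset (diff_subset.trans hAE) (singleton_subset_iff.2 (hAE (hB' heB'))),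
      K, hKbase, ?_⟩
    rw [disjoint_union_left]
    constructor
    · rw [disjoint_left]
      intro x hx hxK
      have := hK.subset hxK
      rcases this with h' | h'
      · exact hx.2 h'
      · rw [hA] at hx; exact hx.1.2 (hI₀.subset h')
    · simpa using heK
  have := h.2 ⟨hJindep, union_subset diff_subset (singleton_subset_iff.2 (hB' heB'))⟩
    subset_union_left
  have heAB' : e ∈ A \ B' := this (Or.inr rfl)
  exact heAB'.2 heB'

lemma factD2 {A B' I₀ : Set α} (hC : C ⊆ M.E) (hA : A = M.E \ C) (hI₀ : M.IsBasis' I₀ C)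
    (hB' : B' ⊆ A) (hbase : M.IsBase (B' ∪ I₀)) : M✶.IsBasis' (A \ B') A := by
  have hAE : A ⊆ M.E := by rw [hA]; exact diff_subset
  have hdisjCA : Disjoint A C := by rw [hA]; exact disjoint_sdiff_left
  have hPfst : M✶.Indep (A \ B') := by
    rw [dual_indep_iff_exists']
    refine ⟨diff_subset.trans hAE, B' ∪ I₀, hbase, ?_⟩
    rw [disjoint_union_right]
    exact ⟨disjoint_sdiff_left,
      (hdisjCA.mono_right hI₀.subset).mono_left diff_subset⟩
  refine ⟨⟨hPfst, diff_subset⟩, fun K hK hsub => ?_⟩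
  intro x hxK
  have hxA : x ∈ A := hK.2 hxK
  refine ⟨hxA, fun hxB' => ?_⟩
  obtain ⟨hKE, B₁, hB₁, hdisj⟩ := dual_indep_iff_exists'.1 hK.1
  have hxnI₀ : x ∉ I₀ := fun h' => (hdisjCA.mono_right hI₀.subset).ne_of_mem hxA h' rfl
  have hB₁sub : B₁ ⊆ (B' ∪ I₀) \ {x} ∪ C := by
    intro y hy
    have hyE : y ∈ M.E := hB₁.subset_ground hy
    have hynK : y ∉ K := disjoint_right.1 hdisj hy
    by_cases hyC : y ∈ C
    · exact Or.inr hyC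
    have hyA : y ∈ A := by rw [hA]; exact ⟨hyE, hyC⟩
    have hyB' : y ∈ B' := by
      by_contra hyB'
      exact hynK (hsub ⟨hyA, hyB'⟩)
    have hyx : y ≠ x := fun h' => hynK (h' ▸ hxK)
    exact Or.inl ⟨Or.inl hyB', hyx⟩
  have hxcl : x ∉ M.closure ((B' ∪ I₀) \ {x}) :=
    hbase.indep.notMem_closure_diff_of_mem (Or.inl hxB')
  have : M.E ⊆ M.closure ((B' ∪ I₀) \ {x}) := by
    calc M.E = M.closure B₁ := hB₁.closure_eq.symm
    _ ⊆ M.closure ((B' ∪ I₀) \ {x} ∪ C) := M.closure_subset_closure hB₁sub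
    _ = M.closure ((B' ∪ I₀) \ {x} ∪ I₀) := (closure_union_basis' hI₀ _).symm
    _ = M.closure ((B' ∪ I₀) \ {x}) := by
        rw [union_eq_self_of_subset_right]
        intro y hy
        exact ⟨Or.inr hy, fun h' => hxnI₀ (h' ▸ hy)⟩
  exact hxcl (this (hAE hxA))

lemma mcontract_indep_iff {I₀ : Set α} (hC : C ⊆ M.E) (hI₀ : M.IsBasis' I₀ C) :
    (mcontract M C).Indep X ↔ X ⊆ M.E \ C ∧ M.Indep (X ∪ I₀) := by
  have hgr : (M✶ ↾ (M.E \ C)).E = M.E \ C := by simp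
  have hNd : mcontract M C = (M✶ ↾ (M.E \ C))✶ := by
    simp only [mcontract, mdelete, dual_ground]
  set A := M.E \ C with hA
  rw [hNd, dual_indep_iff_exists']
  simp only [hgr]
  constructor
  · rintro ⟨hXA, B, hB, hdisj⟩
    have hBbasis : M✶.IsBasis' B A := isBase_restrict_iff'.1 hB
    have hBA : B ⊆ A := hBbasis.subset
    have h1 : M.IsBase ((A \ B) ∪ I₀) := by
      refine factD1 hC hA hI₀ diff_subset ?_
      rwa [diff_diff_cancel_left hBA]
    refine ⟨hXA, h1.indep.subset ?_⟩
    apply union_subset_union_left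
    intro x hx
    exact ⟨hXA hx, disjoint_left.1 hdisj hx⟩
  · rintro ⟨hXA, hind⟩
    obtain ⟨BM, hBM, hsub⟩ := hind.exists_isBase_superset
    have hBMeq : (BM ∩ A) ∪ I₀ = BM := by
      have h1 : BM ∩ C = I₀ :=
        (hI₀.eq_of_subset_indep (hBM.indep.subset inter_subset_left)
          (subset_inter (subset_union_right.trans hsub) hI₀.subset) inter_subset_right).symm
      ext x
      constructor
      · rintro (⟨h', _⟩ | h')
        · exact h'
        · exact subset_union_right.trans hsub h'
      · intro hx
        by_cases hxC : x ∈ C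
        · exact Or.inr (h1 ▸ ⟨hx, hxC⟩)
        · exact Or.inl ⟨hx, ⟨hBM.subset_ground hx, hxC⟩⟩
    have h2 : M✶.IsBasis' (A \ (BM ∩ A)) A :=
      factD2 hC hA hI₀ inter_subset_right (by rw [hBMeq]; exact hBM)
    refine ⟨hXA, A \ (BM ∩ A), isBase_restrict_iff'.2 h2, ?_⟩
    rw [disjoint_right]
    rintro x ⟨_, hx2⟩ hxX
    exact hx2 ⟨subset_union_left.trans hsub hxX, hXA hxX⟩

end Contract

section Toolkit

lemma TK {a b c d : α} {C : Set α} (hC : C ⊆ M.E) (hbE : b ∈ M.E)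
    (hdE : d ∈ M.E) (haC : a ∉ C) (hbC : b ∉ C) (hcC : c ∉ C) (hdC : d ∉ C)
    (hbc : b ≠ c)
    (hacl : a ∈ M.closure C) (hbcl : b ∉ M.closure C) (hccl : c ∉ M.closure C)
    (hccl2 : c ∈ M.closure (C ∪ {b})) (hdcl : d ∉ M.closure (C ∪ {b})) :
    ∃ N : Matroid α, IsMinorOf N M ∧ IsU01U12U11 N := by
  obtain ⟨I₀, hI₀⟩ := M.exists_isBasis' C
  have haE : a ∈ M.E := M.closure_subset_ground C hacl
  have hcE : c ∈ M.E := M.closure_subset_ground _ hccl2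
  have hCbE : C ∪ {b} ⊆ M.E := union_subset hC (singleton_subset_iff.2 hbE)
  have hsubcl : M.closure C ⊆ M.closure (C ∪ {b}) := M.closure_subset_closure subset_union_left
  have hab : a ≠ b := fun h => hbcl (h ▸ hacl)
  have hac : a ≠ c := fun h => hccl (h ▸ hacl)
  have had : a ≠ d := fun h => hdcl (h ▸ (hsubcl hacl))
  have hbd : b ≠ d := fun h => hdcl (h ▸ (M.subset_closure _ hCbE (Or.inr rfl)))
  have hcd : c ≠ d := fun h => hdcl (h ▸ hccl2)
  have hclI₀ : M.closure I₀ = M.closure C := hI₀.closure_eq_closure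
  have hclI₀b : M.closure (insert b I₀) = M.closure (C ∪ {b}) := by
    rw [← singleton_union, closure_union_basis' hI₀, union_comm {b} C]
  have haI₀ : a ∉ I₀ := fun h => haC (hI₀.subset h)
  have hbI₀ : b ∉ I₀ := fun h => hbC (hI₀.subset h)
  have hcI₀ : c ∉ I₀ := fun h => hcC (hI₀.subset h)
  have hdI₀ : d ∉ I₀ := fun h => hdC (hI₀.subset h)
  have hIb : M.Indep (insert b I₀) := by
    rw [hI₀.indep.insert_indep_iff_of_notMem hbI₀, hclI₀]
    exact ⟨hbE, hbcl⟩
  have hIbd : M.Indep (insert d (insert b I₀)) := by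
    rw [hIb.insert_indep_iff_of_notMem (by simp [hdI₀, hbd.symm]), hclI₀b]
    exact ⟨hdE, hdcl⟩
  have hIc : M.Indep (insert c I₀) := by
    rw [hI₀.indep.insert_indep_iff_of_notMem hcI₀, hclI₀]
    exact ⟨hcE, hccl⟩
  have hIcd : M.Indep (insert d (insert c I₀)) := by
    rw [hIc.insert_indep_iff_of_notMem (by simp [hdI₀, hcd.symm])]
    refine ⟨hdE, fun hmem => hdcl ?_⟩
    have h1 : M.closure (insert c I₀) ⊆ M.closure (C ∪ {b}) := by
      apply closure_subset_closure_of_subset_closure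
      intro x hx
      rcases hx with rfl | hx
      · exact hccl2
      · exact hsubcl (hclI₀ ▸ M.subset_closure I₀ hI₀.indep.subset_ground
          (by exact hx))
    exact h1 hmem
  set D := M.E \ (C ∪ {a, b, c, d}) with hD
  refine ⟨mdelete (mcontract M C) D, ⟨C, D, rfl⟩, a, b, c, d, ?_, ?_, ?_⟩
  · simp [List.nodup_cons, hab, hac, had, hbc, hbd, hcd]
  · rw [mdelete, restrict_ground_eq, mcontract_ground]
    ext x
    constructor
    · rintro ⟨⟨hxE, hxC⟩, hxD⟩
      have hx' : x ∈ C ∪ {a, b, c, d} := by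
        by_contra hcon
        exact hxD ⟨hxE, hcon⟩
      rcases hx' with h | h
      · exact absurd h hxC
      · exact h
    · intro hx
      have hxE : x ∈ M.E := by rcases hx with rfl | rfl | rfl | rfl <;> assumption
      have hxC : x ∉ C := by rcases hx with rfl | rfl | rfl | rfl <;> assumption
      exact ⟨⟨hxE, hxC⟩, fun hD' => hD'.2 (Or.inr hx)⟩
  · intro X hX
    rw [mdelete, restrict_ground_eq] at hX
    rw [mdelete, restrict_indep_iff, mcontract_indep_iff hC hI₀]
    have hXsub : X ⊆ {a, b, c, d} := by
      intro x hx
      have h1 := hX hx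
      rw [mcontract_ground] at h1
      by_contra hcon
      exact h1.2 ⟨h1.1.1, fun h' => h'.elim (fun hc => h1.1.2 hc) hcon⟩
    constructor
    · rintro ⟨⟨hXEC, hind⟩, -⟩
      constructor
      · intro haX
        have : M.Dep (insert a I₀) := by
          rw [hI₀.indep.insert_dep_iff]
          exact ⟨hclI₀ ▸ hacl, haI₀⟩
        exact this.not_indep (hind.subset (insert_subset (Or.inl haX) subset_union_right))
      · intro hbcX
        have : M.Dep (insert c (insert b I₀)) := by
          rw [hIb.insert_dep_iff]
          exact ⟨hclI₀b ▸ hccl2, by simp [hcI₀, hbc.symm]⟩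
        exact this.not_indep (hind.subset (insert_subset (Or.inl (hbcX (Or.inr rfl)))
          (insert_subset (Or.inl (hbcX (Or.inl rfl))) subset_union_right)))
    · rintro ⟨haX, hbcX⟩
      have hXcase : X ⊆ {b, d} ∨ X ⊆ {c, d} := by
        by_cases hbX : b ∈ X
        · left
          intro x hx
          rcases hXsub hx with rfl | rfl | rfl | rfl
          · exact absurd hx haX
          · exact Or.inl rfl
          · exact absurd (fun y hy => by rcases hy with rfl | rfl; exact hbX; exact hx) hbcX
          · exact Or.inr rfl
        · right
          intro x hx
          rcases hXsub hx with rfl | rfl | rfl | rfl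
          · exact absurd hx haX
          · exact absurd hx hbX
          · exact Or.inl rfl
          · exact Or.inr rfl
      have hXEC : X ⊆ M.E \ C := by
        intro x hx
        rcases hXsub hx with rfl | rfl | rfl | rfl
        · exact ⟨haE, haC⟩
        · exact ⟨hbE, hbC⟩
        · exact ⟨hcE, hcC⟩
        · exact ⟨hdE, hdC⟩
      refine ⟨⟨hXEC, ?_⟩, fun x hx => hX hx⟩
      rcases hXcase with h | h
      · refine hIbd.subset (union_subset ?_ ((subset_insert _ _).trans (subset_insert _ _)))
        intro y hy
        rcases h hy with rfl | rfl
        · exact Or.inr (Or.inl rfl)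
        · exact Or.inl rfl
      · refine hIcd.subset (union_subset ?_ ((subset_insert _ _).trans (subset_insert _ _)))
        intro y hy
        rcases h hy with rfl | rfl
        · exact Or.inr (Or.inl rfl)
        · exact Or.inl rfl

end Toolkit

section Easy

lemma elemSplit_mdelete (h : IsElemSplit M) (D : Set α) : IsElemSplit (mdelete M D) := by
  obtain ⟨q, H, r, rr, hfin, hrE, hHE, hpair, hiff⟩ := h
  have hgr : (mdelete M D).E = M.E \ D := by simp [mdelete]
  set r' := rnk M (M.E \ D) with hr'
  have hr'le : r' ≤ r := by
    obtain ⟨I, hI⟩ := M.exists_isBasis' (M.E \ D)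
    rw [hr', rnk_eq hI]
    exact ((hiff I hI.indep.subset_ground).1 hI.indep).1
  refine ⟨q, fun i => H i \ D, r', rr, ?_, ?_, ?_, ?_, ?_⟩
  · rw [hgr]; exact (hfin.diff)
  · rw [hgr]; exact rnk_le_ncard (hfin.diff)
  · intro i; rw [hgr]; exact diff_subset_diff_left (hHE i)
  · intro i j hij
    refine le_trans ?_ (hpair i j hij)
    have h1 : (H i \ D) ∩ (H j \ D) ⊆ H i ∩ H j := inter_subset_inter diff_subset diff_subset
    exact add_le_add (ncard_le_ncard h1 (hfin.subset (inter_subset_left.trans (hHE i)))) hr'le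
  · intro X hX
    rw [hgr] at hX
    rw [mdelete_indep_iff]
    have hXE : X ⊆ M.E := hX.trans diff_subset
    have heq : ∀ i, X ∩ H i = X ∩ (H i \ D) := by
      intro i
      ext x
      exact ⟨fun hx => ⟨hx.1, hx.2, (hX hx.1).2⟩, fun hx => ⟨hx.1, hx.2.1⟩⟩
    constructor
    · rintro ⟨hind, hsub⟩
      refine ⟨indep_le_rnk hind hX (hfin.subset inter_subset_right), fun i => ?_⟩
      rw [← heq]
      exact ((hiff X hXE).1 hind).2 i
    · rintro ⟨hcard, hcs⟩
      refine ⟨(hiff X hXE).2 ⟨hcard.trans hr'le, fun i => ?_⟩, hX⟩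
      rw [heq]
      exact hcs i

lemma elemSplit_mcontract (h : IsElemSplit M) (C : Set α) : IsElemSplit (mcontract M C) := by
  rw [mcontract_inter_ground]
  obtain ⟨q, H, r, rr, hfin, hrE, hHE, hpair, hiff⟩ := h
  set C' := C ∩ M.E with hC'def
  obtain ⟨I₀, hI₀⟩ := M.exists_isBasis' C'
  have hC' : C' ⊆ M.E := inter_subset_right
  set N := mcontract M C' with hN
  have hgr : N.E = M.E \ C' := mcontract_ground M C'
  have hI₀E : I₀ ⊆ M.E := hI₀.indep.subset_ground
  have hI₀C : I₀ ⊆ C' := hI₀.subset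
  have hI₀fin : I₀.Finite := hfin.subset hI₀E
  set r' := rnk N (M.E \ C') with hr'
  have hrrI : ∀ i, (I₀ ∩ H i).ncard ≤ rr i := fun i => ((hiff I₀ hI₀E).1 hI₀.indep).2 i
  have hkey : r' + I₀.ncard ≤ r := by
    obtain ⟨B, hB⟩ := N.exists_isBasis' (M.E \ C')
    have hBind : M.Indep (B ∪ I₀) ∧ B ⊆ M.E \ C' := by
      have := (mcontract_indep_iff hC' hI₀).1 hB.indep
      exact ⟨this.2, this.1⟩
    have hdisj : Disjoint B I₀ := disjoint_sdiff_left.mono_right hI₀C |>.mono_left hBind.2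
    have h1 : (B ∪ I₀).ncard = B.ncard + I₀.ncard :=
      ncard_union_eq hdisj (hfin.subset (hBind.2.trans diff_subset)) hI₀fin
    have h2 := ((hiff (B ∪ I₀) (union_subset (hBind.2.trans diff_subset) hI₀E)).1 hBind.1).1
    rw [hr', rnk_eq hB]
    omega
  refine ⟨q, fun i => H i \ C', r', fun i => rr i - (I₀ ∩ H i).ncard, ?_, ?_, ?_, ?_, ?_⟩
  · rw [hgr]; exact (hfin.diff)
  · rw [hgr]; exact rnk_le_ncard (hfin.diff)
  · intro i; rw [hgr]; exact diff_subset_diff_left (hHE i)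
  · intro i j hij
    have hp := hpair i j hij
    have hfinij : (H i ∩ H j).Finite := hfin.subset (inter_subset_left.trans (hHE i))
    have e1 : (I₀ ∩ H i) ∩ (I₀ ∩ H j) = I₀ ∩ (H i ∩ H j) := by
      rw [inter_inter_inter_comm, inter_self]
    have h2 : (I₀ ∩ H i).ncard + (I₀ ∩ H j).ncard ≤ I₀.ncard + (I₀ ∩ (H i ∩ H j)).ncard := by
      have := ncard_union_add_ncard_inter (I₀ ∩ H i) (I₀ ∩ H j)
        (hI₀fin.subset inter_subset_left) (hI₀fin.subset inter_subset_left)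
      rw [e1] at this
      have hle : ((I₀ ∩ H i) ∪ (I₀ ∩ H j)).ncard ≤ I₀.ncard :=
        ncard_le_ncard (union_subset inter_subset_left inter_subset_left) hI₀fin
      omega
    have h3 : ((H i \ C') ∩ (H j \ C')).ncard + (I₀ ∩ (H i ∩ H j)).ncard ≤ (H i ∩ H j).ncard := by
      have hdisj : Disjoint ((H i \ C') ∩ (H j \ C')) (I₀ ∩ (H i ∩ H j)) := by
        rw [disjoint_left]
        rintro x ⟨⟨_, hx1⟩, _⟩ ⟨hx2, _⟩
        exact hx1 (hI₀C hx2)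
      have := ncard_union_eq hdisj
        (hfinij.subset (fun x hx => ⟨hx.1.1, hx.2.1⟩))
        (hfinij.subset inter_subset_right)
      have hsub : ((H i \ C') ∩ (H j \ C')) ∪ (I₀ ∩ (H i ∩ H j)) ⊆ H i ∩ H j := by
        rintro x (⟨⟨h1, _⟩, ⟨h2, _⟩⟩ | ⟨_, h2⟩)
        · exact ⟨h1, h2⟩
        · exact h2
      have := ncard_le_ncard hsub hfinij
      omega
    have hi := hrrI i
    have hj := hrrI j
    beta_reduce
    omega
  · intro X hX
    rw [hgr] at hX
    rw [hN, mcontract_indep_iff hC' hI₀]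
    have hXE : X ⊆ M.E := hX.trans diff_subset
    have hXfin : X.Finite := hfin.subset hXE
    have hdisj : Disjoint X I₀ := disjoint_sdiff_left.mono_right hI₀C |>.mono_left hX
    have hXIcard : (X ∪ I₀).ncard = X.ncard + I₀.ncard := ncard_union_eq hdisj hXfin hI₀fin
    have hXIE : X ∪ I₀ ⊆ M.E := union_subset hXE hI₀E
    have hci : ∀ i, ((X ∪ I₀) ∩ H i).ncard = (X ∩ (H i \ C')).ncard + (I₀ ∩ H i).ncard := by
      intro i
      have e1 : (X ∪ I₀) ∩ H i = (X ∩ H i) ∪ (I₀ ∩ H i) := by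
        rw [union_inter_distrib_right]
      have e2 : X ∩ H i = X ∩ (H i \ C') := by
        ext x
        exact ⟨fun hx => ⟨hx.1, hx.2, (hX hx.1).2⟩, fun hx => ⟨hx.1, hx.2.1⟩⟩
      rw [e1, e2, ncard_union_eq (hdisj.mono inter_subset_left inter_subset_left)
        (hXfin.subset inter_subset_left) (hI₀fin.subset inter_subset_left)]
    constructor
    · rintro ⟨hXA, hind⟩
      have hNind : N.Indep X := (mcontract_indep_iff hC' hI₀).2 ⟨hXA, hind⟩
      refine ⟨?_, fun i => ?_⟩
      · rw [hr']
        exact indep_le_rnk (M := N) hNind hX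
          (by rw [hgr]; exact (hfin.diff).subset inter_subset_left)
      · have h1 := ((hiff (X ∪ I₀) hXIE).1 hind).2 i
        have h2 := hci i
        beta_reduce
        omega
    · rintro ⟨hcard, hcs⟩
      refine ⟨hX, (hiff (X ∪ I₀) hXIE).2 ⟨?_, fun i => ?_⟩⟩
      · omega
      · have h1 := hci i
        have h2 := hcs i
        have h3 := hrrI i
        beta_reduce at h2 ⊢
        omega

lemma singleton_ncard_le {x : α} {S : Set α} (h : x ∈ S) : 1 ≤ S.ncard ∨ S.Infinite := by
  rcases S.finite_or_infinite with hf | hf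
  · exact Or.inl (by rw [← ncard_singleton x]; exact ncard_le_ncard (by simpa using h) hf)
  · exact Or.inr hf

lemma not_elemSplit_of_isU (hU : IsU01U12U11 M) : ¬ IsElemSplit M := by
  obtain ⟨a, b, c, d, hnodup, hE, hchar⟩ := hU
  simp only [List.nodup_cons, List.mem_cons, List.mem_singleton, List.not_mem_nil, or_false,
    List.nodup_nil, and_true, not_or] at hnodup
  obtain ⟨⟨hab, hac, had⟩, ⟨hbc, hbd⟩, hcd, -⟩ := hnodup
  have hsubA : ({a} : Set α) ⊆ M.E := by
    rw [hE]; exact singleton_subset_iff.2 (Or.inl rfl)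
  have hsubB : ({b} : Set α) ⊆ M.E := by
    rw [hE]; exact singleton_subset_iff.2 (Or.inr (Or.inl rfl))
  have hsubC : ({c} : Set α) ⊆ M.E := by
    rw [hE]; exact singleton_subset_iff.2 (Or.inr (Or.inr (Or.inl rfl)))
  have hsubBC : ({b, c} : Set α) ⊆ M.E := by
    rw [hE]; rintro x (rfl | rfl)
    · exact Or.inr (Or.inl rfl)
    · exact Or.inr (Or.inr (Or.inl rfl))
  have hsubBD : ({b, d} : Set α) ⊆ M.E := by
    rw [hE]; rintro x (rfl | rfl)
    · exact Or.inr (Or.inl rfl)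
    · exact Or.inr (Or.inr (Or.inr rfl))
  have hbi : M.Indep {b} := by
    rw [hchar _ hsubB]
    refine ⟨by simp [hab], fun h => hbc ?_⟩
    have h2 : c = b := h (Or.inr rfl)
    exact h2.symm
  have hci : M.Indep {c} := by
    rw [hchar _ hsubC]
    refine ⟨by simp [hac], fun h => hbc ?_⟩
    exact h (Or.inl rfl)
  have hbdi : M.Indep {b, d} := by
    rw [hchar _ hsubBD]
    refine ⟨by simp [hab, had], fun h => ?_⟩
    rcases h (Or.inr rfl) with rfl | rfl
    · exact hbc rfl
    · exact hcd rfl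
  have hadep : ¬ M.Indep {a} := fun h => ((hchar _ hsubA).1 h).1 rfl
  have hbcdep : ¬ M.Indep {b, c} := fun h => ((hchar _ hsubBC).1 h).2 subset_rfl
  rintro ⟨q, H, r, rr, hfin, hrE, hHE, hpair, hiff⟩
  have hr2 : 2 ≤ r := by
    have := ((hiff _ hsubBD).1 hbdi).1
    rwa [ncard_pair hbd] at this
  have hnot : ∀ (k : Fin q) (e : α), rr k = 0 → M.Indep {e} → e ∉ H k := by
    intro k e hk he heH
    have h1 := ((hiff {e} he.subset_ground).1 he).2 k
    rw [hk] at h1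
    have hfe : ({e} ∩ H k).Finite := (finite_singleton e).subset inter_subset_left
    have h2 : ({e} ∩ H k) = ∅ := (ncard_eq_zero hfe).1 (by omega)
    exact (eq_empty_iff_forall_notMem.1 h2) e ⟨rfl, heH⟩
  obtain ⟨i, hi⟩ : ∃ i, rr i < (({a} : Set α) ∩ H i).ncard := by
    by_contra h
    push_neg at h
    exact hadep ((hiff _ hsubA).2 ⟨by rw [ncard_singleton]; omega, h⟩)
  have h2 : (({a} : Set α) ∩ H i).ncard ≤ 1 := by
    rw [← ncard_singleton a]
    exact ncard_le_ncard inter_subset_left (finite_singleton a)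
  have hrri : rr i = 0 := by omega
  obtain ⟨j, hj⟩ : ∃ j, rr j < (({b, c} : Set α) ∩ H j).ncard := by
    by_contra h
    push_neg at h
    exact hbcdep ((hiff _ hsubBC).2 ⟨by rw [ncard_pair hbc]; omega, h⟩)
  have h3 : (({b, c} : Set α) ∩ H j).ncard ≤ 2 := by
    rw [← ncard_pair hbc]
    exact ncard_le_ncard inter_subset_left (toFinite _)
  have hrrj1 : rr j = 1 := by
    rcases Nat.lt_or_ge (rr j) 1 with h' | h'
    · exfalso
      have h0 : rr j = 0 := by omega
      obtain ⟨x, hx1, hx2⟩ : (({b, c} : Set α) ∩ H j).Nonempty :=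
        nonempty_of_ncard_ne_zero (by omega)
      rcases hx1 with rfl | rfl
      · exact hnot j _ h0 hbi hx2
      · exact hnot j _ h0 hci hx2
    · omega
  have hij : i ≠ j := by
    intro h
    rw [h, hrrj1] at hrri
    omega
  have := hpair i j hij
  rw [hrri, hrrj1] at this
  omega

end Easy

section Hard

/-- From two cyclic "flats" whose union is non-spanning, build the excluded minor. -/
lemma lemN {F1 F2 : Set α} (hE : M.E.Finite)
    (hF1flat : M.closure F1 = F1) (hF1ne : F1.Nonempty)
    (hF1cyc : ∀ e ∈ F1, e ∈ M.closure (F1 \ {e}))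
    (hF2E : F2 ⊆ M.E) (hF2cyc : ∀ e ∈ F2, e ∈ M.closure (F2 \ {e}))
    (hF21 : ¬ F2 ⊆ F1) (hspan : M.closure (F1 ∪ F2) ≠ M.E) :
    ∃ N : Matroid α, IsMinorOf N M ∧ IsU01U12U11 N := by
  have hF1E : F1 ⊆ M.E := hF1flat ▸ M.closure_subset_ground F1
  obtain ⟨B1, hB1⟩ := M.exists_isBasis' F1
  have hclB1 : M.closure B1 = F1 := by rw [hB1.closure_eq_closure, hF1flat]
  have hF1dep : ¬ M.Indep F1 := by
    intro hind
    obtain ⟨e, he⟩ := hF1ne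
    exact hind.notMem_closure_diff_of_mem he (hF1cyc e he)
  obtain ⟨a, haF1, haB1⟩ : ∃ a, a ∈ F1 ∧ a ∉ B1 := by
    by_contra h
    push_neg at h
    exact hF1dep (by rw [Subset.antisymm (fun x hx => h x hx) hB1.subset]; exact hB1.indep)
  obtain ⟨B', hB', hB1B'⟩ := hB1.indep.subset_isBasis'_of_subset
    (subset_union_left (s := B1) (t := F2))
  have hB'E : B' ⊆ M.E := hB'.indep.subset_ground
  have hclB' : M.closure B' = M.closure (F1 ∪ F2) := by
    rw [hB'.closure_eq_closure, ← hclB1, closure_union_closure_left_eq]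
  have hsubcl : F2 ⊆ M.closure B' := fun x hx =>
    hB'.isBasis_inter_ground.subset_closure ⟨Or.inr hx, hF2E hx⟩
  have hVF2 : ∀ x ∈ B', x ∉ B1 → x ∈ F2 ∧ x ∉ F1 := by
    intro x hxB' hxB1
    have hxF2 : x ∈ F2 := (hB'.subset hxB').elim (fun h => absurd h hxB1) id
    refine ⟨hxF2, fun hxF1 => ?_⟩
    have hdep : M.Dep (insert x B1) := by
      rw [hB1.indep.insert_dep_iff]
      exact ⟨hclB1 ▸ hxF1, hxB1⟩
    exact hdep.not_indep (hB'.indep.subset (insert_subset hxB' hB1B'))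
  obtain ⟨b, hbB', hbB1⟩ : ∃ b, b ∈ B' ∧ b ∉ B1 := by
    by_contra h
    push_neg at h
    have hB'B1 : B' = B1 := Subset.antisymm (fun x hx => h x hx) hB1B'
    refine hF21 (fun x hx => ?_)
    have : x ∈ M.closure B' := hsubcl hx
    rw [hB'B1, hclB1] at this
    exact this
  obtain ⟨hbF2, hbF1⟩ := hVF2 b hbB' hbB1
  set C := B' \ {b} with hCdef
  have hB1C : B1 ⊆ C := fun x hx => ⟨hB1B' hx, fun h => hbB1 (h ▸ hx)⟩
  have hCE : C ⊆ M.E := diff_subset.trans hB'E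
  have hbcl : b ∉ M.closure C := hB'.indep.notMem_closure_diff_of_mem hbB'
  have hCb : C ∪ {b} = B' := by
    rw [hCdef, diff_union_self]
    exact union_eq_self_of_subset_right (singleton_subset_iff.2 hbB')
  obtain ⟨c, hcF2, hccl, hcb⟩ : ∃ c, c ∈ F2 ∧ c ∉ M.closure C ∧ c ≠ b := by
    by_contra h
    push_neg at h
    have hF2b : F2 \ {b} ⊆ M.closure C := by
      rintro x ⟨hx1, hx2⟩
      by_contra hx3
      exact hx2 (h x hx1 hx3)
    have : b ∈ M.closure C :=
      closure_subset_closure_of_subset_closure hF2b (hF2cyc b hbF2)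
    exact hbcl this
  have hacl : a ∈ M.closure C := (M.closure_subset_closure hB1C) (hclB1 ▸ haF1)
  have haC : a ∉ C := by
    intro h
    rcases hB'.subset h.1 with h' | h'
    · exact haB1 h'
    · exact (hVF2 a h.1 haB1).2 haF1
  have hccl2 : c ∈ M.closure (C ∪ {b}) := by rw [hCb]; exact hsubcl hcF2
  obtain ⟨d, hdE, hdcl⟩ : ∃ d ∈ M.E, d ∉ M.closure (C ∪ {b}) := by
    rw [hCb, hclB']
    have hss : M.closure (F1 ∪ F2) ⊂ M.E :=
      (M.closure_subset_ground _).ssubset_of_ne hspan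
    obtain ⟨d, hd1, hd2⟩ := exists_of_ssubset hss
    exact ⟨d, hd1, hd2⟩
  refine TK hCE (hF2E hbF2) hdE haC (fun h => h.2 rfl) (fun h => hccl (M.subset_closure C hCE h))
    (fun h => hdcl (M.subset_closure _ (union_subset hCE (singleton_subset_iff.2 (hF2E hbF2)))
      (Or.inl h))) hcb.symm hacl hbcl hccl hccl2 hdcl

/-- From a proper cyclic flat `F` and a dependent subset `A` not spanning `F`,
build the excluded minor. -/
lemma lemS {F A : Set α} (hE : M.E.Finite)
    (hFflat : M.closure F = F) (hFne : F ≠ M.E)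
    (hFcyc : ∀ e ∈ F, e ∈ M.closure (F \ {e}))
    (hAF : A ⊆ F) (hAdep : M.Dep A) (hAcl : ¬ F ⊆ M.closure A) :
    ∃ N : Matroid α, IsMinorOf N M ∧ IsU01U12U11 N := by
  have hFE : F ⊆ M.E := hFflat ▸ M.closure_subset_ground F
  obtain ⟨BA, hBA⟩ := M.exists_isBasis' A
  obtain ⟨a, haA, haBA⟩ : ∃ a, a ∈ A ∧ a ∉ BA := by
    by_contra h
    push_neg at h
    exact hAdep.not_indep (by rw [Subset.antisymm (fun x hx => h x hx) hBA.subset]; exact hBA.indep)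
  have hacl : a ∈ M.closure BA :=
    hBA.isBasis_inter_ground.subset_closure ⟨haA, hAdep.subset_ground haA⟩
  obtain ⟨B2, hB2, hBAB2⟩ := hBA.indep.subset_isBasis'_of_subset (hBA.subset.trans hAF)
  have hB2E : B2 ⊆ M.E := hB2.indep.subset_ground
  have hFcl : F ⊆ M.closure B2 := fun x hx =>
    hB2.isBasis_inter_ground.subset_closure ⟨hx, hFE hx⟩
  have hclB2 : M.closure B2 = F := by rw [hB2.closure_eq_closure, hFflat]
  obtain ⟨b, hbB2, hbBA⟩ : ∃ b, b ∈ B2 ∧ b ∉ BA := by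
    by_contra h
    push_neg at h
    refine hAcl (fun x hx => ?_)
    have : M.closure B2 = M.closure A := by
      rw [Subset.antisymm (fun y hy => h y hy) hBAB2, hBA.closure_eq_closure]
    exact this ▸ hFcl hx
  have haB2 : a ∉ B2 := by
    intro h
    have hdep : M.Dep (insert a BA) := by
      rw [hBA.indep.insert_dep_iff]
      exact ⟨hacl, haBA⟩
    exact hdep.not_indep (hB2.indep.subset (insert_subset h hBAB2))
  set C := B2 \ {b} with hCdef
  have hBAC : BA ⊆ C := fun x hx => ⟨hBAB2 hx, fun h => hbBA (h ▸ hx)⟩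
  have hCE : C ⊆ M.E := diff_subset.trans hB2E
  have hbcl : b ∉ M.closure C := hB2.indep.notMem_closure_diff_of_mem hbB2
  have hCb : C ∪ {b} = B2 := by
    rw [hCdef, diff_union_self]
    exact union_eq_self_of_subset_right (singleton_subset_iff.2 hbB2)
  have hbF : b ∈ F := hB2.subset hbB2
  obtain ⟨c, hcF, hccl, hcb⟩ : ∃ c, c ∈ F ∧ c ∉ M.closure C ∧ c ≠ b := by
    by_contra h
    push_neg at h
    have hFb : F \ {b} ⊆ M.closure C := by
      rintro x ⟨hx1, hx2⟩
      by_contra hx3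
      exact hx2 (h x hx1 hx3)
    exact hbcl (closure_subset_closure_of_subset_closure hFb (hFcyc b hbF))
  have hacl' : a ∈ M.closure C := (M.closure_subset_closure hBAC) hacl
  have haC : a ∉ C := fun h => haB2 h.1
  have hccl2 : c ∈ M.closure (C ∪ {b}) := by rw [hCb]; exact hFcl hcF
  obtain ⟨d, hdE, hdF⟩ : ∃ d ∈ M.E, d ∉ F := by
    obtain ⟨d, hd1, hd2⟩ := exists_of_ssubset (hFE.ssubset_of_ne hFne)
    exact ⟨d, hd1, hd2⟩
  have hdcl : d ∉ M.closure (C ∪ {b}) := by rw [hCb, hclB2]; exact hdF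
  refine TK hCE (hFE hbF) hdE haC (fun h => h.2 rfl) (fun h => hccl (M.subset_closure C hCE h))
    (fun h => hdcl (M.subset_closure _ (union_subset hCE (singleton_subset_iff.2 (hFE hbF)))
      (Or.inl h))) hcb.symm hacl' hbcl hccl hccl2 hdcl

end Hard

section Main

lemma hard_dir (hfin : M.E.Finite)
    (hnm : ¬ ∃ N : Matroid α, IsMinorOf N M ∧ IsU01U12U11 N) : IsElemSplit M := by
  classical
  set r := rnk M M.E with hrdef
  have hrE : r ≤ M.E.ncard := rnk_le_ncard hfin
  have hbound : ∀ X, M.Indep X → X.ncard ≤ r :=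
    fun X h => indep_le_rnk h h.subset_ground (hfin.subset inter_subset_left)
  by_cases hL : ∃ x, x ∈ M.closure ∅
  · -- M has a loop
    obtain ⟨a0, ha0⟩ := hL
    have hkey : ∀ X, X ⊆ M.E → X ∩ M.closure ∅ = ∅ → X.ncard ≤ r → M.Indep X := by
      by_contra hcon
      push_neg at hcon
      obtain ⟨X, hXE, hXL, hXr, hXdep⟩ := hcon
      obtain ⟨C', hC'X, hC'dep, hC'min⟩ := exists_min_dep (hfin.subset hXE) (⟨hXdep, hXE⟩)
      have hC'fin : C'.Finite := (hfin.subset hXE).subset hC'X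
      have hC'L : ∀ x ∈ C', x ∉ M.closure ∅ := by
        intro x hx hxL
        have hmem : x ∈ X ∩ M.closure ∅ := ⟨hC'X hx, hxL⟩
        rw [hXL] at hmem
        exact notMem_empty x hmem
      obtain ⟨b, hbC'⟩ := hC'dep.nonempty
      obtain ⟨c, hcC', hcb⟩ : ∃ c, c ∈ C' ∧ c ≠ b := by
        by_contra h
        push_neg at h
        have h2 := min_dep_closure hC'dep hC'min hbC'
        have hC'b : C' \ {b} = ∅ := by
          rw [eq_empty_iff_forall_notMem]
          rintro x ⟨hx1, hx2⟩
          exact hx2 (h x hx1)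
        rw [hC'b] at h2
        exact hC'L b hbC' h2
      set C0 := C' \ {b, c} with hC0def
      have hC0E : C0 ⊆ M.E := (diff_subset.trans hC'X).trans hXE
      have hC0b : C' \ {c} = C0 ∪ {b} := by
        ext x
        constructor
        · rintro ⟨hx1, hx2⟩
          by_cases hxb : x = b
          · exact Or.inr hxb
          · exact Or.inl ⟨hx1, fun h => h.elim hxb hx2⟩
        · rintro (⟨hx1, hx2⟩ | rfl)
          · exact ⟨hx1, fun h => hx2 (Or.inr h)⟩
          · exact ⟨hbC', hcb.symm⟩
      have hC0c : C' \ {b} = C0 ∪ {c} := by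
        ext x
        constructor
        · rintro ⟨hx1, hx2⟩
          by_cases hxc : x = c
          · exact Or.inr hxc
          · exact Or.inl ⟨hx1, fun h => h.elim hx2 hxc⟩
        · rintro (⟨hx1, hx2⟩ | rfl)
          · exact ⟨hx1, fun h => hx2 (Or.inl h)⟩
          · exact ⟨hcC', hcb⟩
      have hIc : M.Indep (C' \ {c}) := hC'min c hcC'
      have hIb : M.Indep (C' \ {b}) := hC'min b hbC'
      have hbcl : b ∉ M.closure C0 := by
        intro h
        have hdep : M.Dep (insert b C0) := by
          rw [(hIc.subset (by rw [hC0b]; exact subset_union_left)).insert_dep_iff]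
          exact ⟨h, fun h' => h'.2 (Or.inl rfl)⟩
        rw [← union_singleton, ← hC0b] at hdep
        exact hdep.not_indep hIc
      have hccl : c ∉ M.closure C0 := by
        intro h
        have hdep : M.Dep (insert c C0) := by
          rw [(hIb.subset (by rw [hC0c]; exact subset_union_left)).insert_dep_iff]
          exact ⟨h, fun h' => h'.2 (Or.inr rfl)⟩
        rw [← union_singleton, ← hC0c] at hdep
        exact hdep.not_indep hIb
      have hccl2 : c ∈ M.closure (C0 ∪ {b}) := by
        rw [← hC0b]
        exact min_dep_closure hC'dep hC'min hcC'
      have hacl : a0 ∈ M.closure C0 := M.closure_subset_closure (empty_subset C0) ha0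
      obtain ⟨d, hdE, hdcl⟩ : ∃ d ∈ M.E, d ∉ M.closure (C0 ∪ {b}) := by
        rw [← hC0b]
        apply exists_not_mem_closure hfin
        rw [rnk_indep hIc, ← hrdef]
        have h1 : C'.ncard ≤ X.ncard := ncard_le_ncard hC'X (hfin.subset hXE)
        have h2 : 1 ≤ C'.ncard := by
          rw [← ncard_singleton b]
          exact ncard_le_ncard (singleton_subset_iff.2 hbC') hC'fin
        have h3 : (C' \ {c}).ncard = C'.ncard - 1 := ncard_diff_singleton_of_mem hcC'
        omega
      refine hnm (TK hC0E (hXE (hC'X hbC')) hdE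
        (fun h => hC'L a0 (diff_subset h) ha0)
        (fun h => h.2 (Or.inl rfl)) (fun h => h.2 (Or.inr rfl))
        (fun h => hdcl (M.subset_closure _ (union_subset hC0E
          (singleton_subset_iff.2 (hXE (hC'X hbC')))) (Or.inl h)))
        hcb.symm hacl hbcl hccl hccl2 hdcl)
    refine ⟨1, fun _ => M.closure ∅, r, fun _ => 0, hfin, hrE,
      fun _ => M.closure_subset_ground ∅, fun i j hij => absurd (Subsingleton.elim i j) hij,
      fun X hX => ?_⟩
    constructor
    · intro hind
      refine ⟨hbound X hind, fun _ => ?_⟩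
      have hempty : X ∩ M.closure ∅ = ∅ := by
        rw [eq_empty_iff_forall_notMem]
        rintro x ⟨hx1, hx2⟩
        have hdep : M.Dep {x} := by
          have := (M.empty_indep.insert_dep_iff (e := x))
          rw [insert_empty_eq] at this
          exact this.2 ⟨hx2, notMem_empty x⟩
        exact hdep.not_indep (hind.subset (singleton_subset_iff.2 hx1))
      rw [hempty, ncard_empty]
    · rintro ⟨h1, h2⟩
      have h3 : (X ∩ M.closure ∅).ncard ≤ 0 := h2 0
      have hXLfin : (X ∩ M.closure ∅).Finite := (hfin.subset hX).subset inter_subset_left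
      exact hkey X hX ((ncard_eq_zero hXLfin).1 (by omega)) h1
  · -- M is loopless
    push_neg at hL
    set Fs := {F : Set α | M.closure F = F ∧ F.Nonempty ∧ F ≠ M.E ∧
      ∀ e ∈ F, e ∈ M.closure (F \ {e})} with hFsdef
    have hFsub : ∀ F ∈ Fs, F ⊆ M.E := fun F hF => hF.1 ▸ M.closure_subset_ground F
    have hFsfin : Fs.Finite := hfin.finite_subsets.subset (fun F hF => hFsub F hF)
    haveI := hFsfin.fintype
    set q := Fintype.card ↥Fs with hq
    set eqv := Fintype.equivFin ↥Fs with heqv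
    set H : Fin q → Set α := fun i => ((eqv.symm i : ↥Fs) : Set α) with hH
    have Hmem : ∀ i, H i ∈ Fs := fun i => (eqv.symm i).2
    have Hinj : Function.Injective H :=
      fun i j hij => by
        have := Subtype.coe_injective (a₁ := eqv.symm i) (a₂ := eqv.symm j) hij
        exact eqv.symm.injective this
    have Hsurj : ∀ F ∈ Fs, ∃ i, H i = F := fun F hF => ⟨eqv ⟨F, hF⟩, by simp [hH]⟩
    refine ⟨q, H, r, fun i => rnk M (H i), hfin, hrE, fun i => hFsub _ (Hmem i), ?_, ?_⟩
    · -- pair condition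
      intro i j hij
      by_contra hv
      push_neg at hv
      obtain ⟨hFi1, hFi2, hFi3, hFi4⟩ := Hmem i
      obtain ⟨hFj1, hFj2, hFj3, hFj4⟩ := Hmem j
      have hne : H i ≠ H j := fun h => hij (Hinj h)
      have hiE : H i ⊆ M.E := hFsub _ (Hmem i)
      have hjE : H j ⊆ M.E := hFsub _ (Hmem j)
      by_cases hsp : M.closure (H i ∪ H j) = M.E
      · -- spanning case : F1 ∩ F2 is dependent, use lemS
        set J := H i ∩ H j with hJdef
        have hJE : J ⊆ M.E := inter_subset_left.trans hiE
        have hclJ : M.closure J = J := by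
          refine Subset.antisymm ?_ (M.subset_closure J hJE)
          intro x hx
          exact ⟨hFi1 ▸ (M.closure_subset_closure inter_subset_left) hx,
            hFj1 ▸ (M.closure_subset_closure inter_subset_right) hx⟩
        have hsub := submod hfin hiE hjE
        have hspr : rnk M (H i ∪ H j) = r := by
          rw [← rnk_closure_eq, hsp, hrdef]
        have hJdep : M.Dep J := by
          rw [dep_iff, and_iff_left hJE]
          intro hind
          have h1 : rnk M J = J.ncard := rnk_indep hind
          rw [hspr, h1] at hsub
          omega
        have hJF2 : ¬ H j ⊆ M.closure J := by
          rw [hclJ]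
          intro h
          have : H j ⊆ H i := fun x hx => (h hx).1
          rw [union_eq_self_of_subset_right this, hFi1] at hsp
          exact hFi3 hsp
        exact hnm (lemS hfin hFj1 hFj3 hFj4 inter_subset_right hJdep hJF2)
      · -- non-spanning case, use lemN
        by_cases h21 : H j ⊆ H i
        · have h12 : ¬ H i ⊆ H j := fun h => hne (Subset.antisymm h h21)
          refine hnm (lemN hfin hFj1 hFj2 hFj4 hiE hFi4 h12 ?_)
          rwa [union_comm]
        · exact hnm (lemN hfin hFi1 hFi2 hFi4 hjE hFj4 h21 hsp)
    · -- independence characterisation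
      intro X hX
      have hXfin : X.Finite := hfin.subset hX
      constructor
      · intro hind
        refine ⟨hbound X hind, fun i => ?_⟩
        exact indep_le_rnk (hind.subset inter_subset_left) inter_subset_right
          (hfin.subset inter_subset_right)
      · rintro ⟨h1, h2⟩
        by_contra hXdep
        obtain ⟨C', hC'X, hC'dep, hC'min⟩ := exists_min_dep hXfin ⟨hXdep, hX⟩
        have hC'fin : C'.Finite := hXfin.subset hC'X
        have hC'E : C' ⊆ M.E := hC'X.trans hX
        obtain ⟨b0, hb0⟩ := hC'dep.nonempty
        set F := M.closure C' with hFdef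
        have hFcl : M.closure F = F := M.closure_closure C'
        have hC'F : C' ⊆ F := M.subset_closure C' hC'E
        have hFne : F.Nonempty := ⟨b0, hC'F hb0⟩
        have hrnkF : rnk M F = C'.ncard - 1 := by
          rw [hFdef, rnk_closure_eq, rnk_eq (min_dep_basis' hC'dep hC'min hb0),
            ncard_diff_singleton_of_mem hb0]
        have hcard1 : 1 ≤ C'.ncard := by
          rw [← ncard_singleton b0]
          exact ncard_le_ncard (singleton_subset_iff.2 hb0) hC'fin
        have hcardX : C'.ncard ≤ X.ncard := ncard_le_ncard hC'X hXfin
        have hFE : F ≠ M.E := by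
          intro h
          have : rnk M F = r := by rw [h, hrdef]
          omega
        have hFcyc : ∀ e ∈ F, e ∈ M.closure (F \ {e}) := by
          intro e he
          by_cases heC' : e ∈ C'
          · exact (M.closure_subset_closure
              (diff_subset_diff_left hC'F)) (min_dep_closure hC'dep hC'min heC')
          · have hsub : C' ⊆ F \ {e} := fun x hx => ⟨hC'F hx, fun h => heC' (h ▸ hx)⟩
            exact (closure_subset_closure_of_subset_closure
              (hsub.trans (M.subset_closure _ (diff_subset.trans (hFcl ▸
                M.closure_subset_ground F))))) he
        obtain ⟨i, hi⟩ := Hsurj F ⟨hFcl, hFne, hFE, hFcyc⟩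
        have h3 : (X ∩ F).ncard ≤ rnk M F := by
          have h3' : (X ∩ H i).ncard ≤ rnk M (H i) := h2 i
          rwa [hi] at h3'
        have h4 : C'.ncard ≤ (X ∩ F).ncard :=
          ncard_le_ncard (subset_inter hC'X hC'F) (hXfin.subset inter_subset_left)
        omega

end Main

lemma easy_dir (h : IsElemSplit M) :
    ¬ ∃ N : Matroid α, IsMinorOf N M ∧ IsU01U12U11 N := by
  rintro ⟨N, ⟨C, D, rfl⟩, hU⟩
  exact not_elemSplit_of_isU hU (elemSplit_mdelete (elemSplit_mcontract h C) D)

end ElemSplitProof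
theorem stmt11 {α : Type*} (M : Matroid α) (hfin : M.E.Finite) :
    (¬ ∃ N : Matroid α, IsMinorOf N M ∧ IsU01U12U11 N) ↔ IsElemSplit M :=
  ⟨fun h => ElemSplitProof.hard_dir hfin h, fun h => ElemSplitProof.easy_dir h⟩
end

section
/- If a matroid M has no minor isomorphic to U_{0,1} ⊕ U_{1,2} ⊕ U_{1,1} and has two proper cyclic flats X ⊊ Y, then a contradiction follows; i.e., in a U_{0,1} ⊕ U_{1,2} ⊕ U_{1,1}-minor-free matroid that is loopless and coloopless, the proper cyclic flats form a clutter (an antichain under inclusion). -/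
open Matroid Set

variable {α : Type*}

/-! ### Auxiliary lemmas -/

lemma mrk_empty (M : Matroid α) : mrk M (∅ : Set α) = 0 := by
  have h : {n | ∃ I, M.Indep I ∧ I ⊆ (∅ : Set α) ∧ I.ncard = n} = {0} := by
    ext n
    simp only [Set.mem_setOf_eq, Set.mem_singleton_iff, Set.subset_empty_iff]
    constructor
    · rintro ⟨I, -, rfl, rfl⟩; simp
    · rintro rfl; exact ⟨∅, M.empty_indep, rfl, by simp⟩
  rw [mrk, h, csSup_singleton]

lemma cyclic_mem_closure {M : Matroid α} {Z : Set α} (hZ : IsCyclicSet M Z)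
    {e : α} (he : e ∈ Z) : e ∈ M.closure (Z \ {e}) := by
  have h := hZ.2 e he
  have hind : (M ↾ Z)✶.Indep {e} := by
    by_contra hc
    exact h ⟨he, hc⟩
  rw [dual_indep_iff_exists'] at hind
  obtain ⟨-, B, hB, hdj⟩ := hind
  rw [isBase_restrict_iff hZ.1] at hB
  have heB : e ∉ B := Set.disjoint_singleton_left.mp hdj
  exact M.closure_subset_closure (subset_diff_singleton hB.subset heB) (hB.subset_closure he)

lemma mcontract_indep_iff {M : Matroid α} {K I : Set α} (hK : M.Indep K)
    (hIE : I ⊆ M.E) (hIK : Disjoint I K) :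
    (mcontract M K).Indep I ↔ M.Indep (I ∪ K) := by
  have hKE : K ⊆ M.E := hK.subset_ground
  rw [mcontract, mdelete, dual_indep_iff_exists']
  simp only [restrict_ground_eq, dual_ground]
  constructor
  · rintro ⟨hIsub, B, hB, hdj⟩
    rw [isBase_restrict_iff (show M.E \ K ⊆ M✶.E from diff_subset)] at hB
    obtain ⟨B', hB', hBeq⟩ := hB.exists_isBase
    have h1 : M✶.IsBasis (B' ∩ (M.E \ K)) (M.E \ K) := hBeq ▸ hB
    have h2 := (hB'.inter_isBasis_iff_compl_inter_isBasis_dual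
      (X := M.E \ K) (show M.E \ K ⊆ M✶.E from diff_subset)).mp h1
    rw [dual_dual] at h2
    simp only [dual_ground] at h2
    rw [diff_diff_cancel_left hKE] at h2
    have hKB' : K ⊆ M.E \ B' := by
      have heq : (M.E \ B') ∩ K = K :=
        h2.eq_of_subset_indep hK inter_subset_right Subset.rfl
      exact Set.inter_eq_right.mp heq
    have hIB' : Disjoint I B' := by
      refine Set.disjoint_left.mpr fun {x} hxI hxB' => Set.disjoint_left.mp hdj hxI ?_
      rw [hBeq]
      exact ⟨hxB', hIE hxI, Set.disjoint_left.mp hIK hxI⟩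
    exact hB'.compl_isBase_of_dual.indep.subset
      (union_subset (subset_diff.mpr ⟨hIE, hIB'⟩) hKB')
  · intro h
    obtain ⟨B', hB', hIKB'⟩ := h.exists_isBase_superset
    have hKB' : K ⊆ B' := subset_union_right.trans hIKB'
    have h1 : M.IsBasis (B' ∩ K) K := by
      rw [Set.inter_eq_right.mpr hKB']; exact hK.isBasis_self
    have h2 := (hB'.inter_isBasis_iff_compl_inter_isBasis_dual hKE).mp h1
    rw [Set.inter_eq_left.mpr (diff_subset_diff_right hKB')] at h2
    refine ⟨subset_diff.mpr ⟨hIE, hIK⟩, M.E \ B', ?_, ?_⟩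
    · rwa [isBase_restrict_iff (show M.E \ K ⊆ M✶.E from diff_subset)]
    · exact disjoint_sdiff_right.mono_left (subset_union_left.trans hIKB')

theorem stmt12 {α : Type*} (M : Matroid α) (hfin : M.E.Finite)
    (hminor : ¬ ∃ N : Matroid α, IsMinorOf N M ∧ IsU01U12U11 N)
    (hloopless : ∀ e, ¬ IsLoopOf M e) (hcoloopless : ∀ e, ¬ IsColoopOf M e) :
    ∀ X Y, ProperCyclicFlat M X → ProperCyclicFlat M Y → X ⊆ Y → X = Y := by
  intro X Y hX hY hXY
  by_contra hne
  obtain ⟨hXflat, hXcyc, hXrk, hXne⟩ := hX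
  obtain ⟨hYflat, hYcyc, hYrk, hYneE⟩ := hY
  have hXE : X ⊆ M.E := hXcyc.1
  have hYE : Y ⊆ M.E := hYcyc.1
  have hXnonempty : X.Nonempty := by
    rcases X.eq_empty_or_nonempty with h | h
    · rw [h] at hXrk; exact absurd (mrk_empty M) hXrk
    · exact h
  obtain ⟨BX, hBX⟩ := M.exists_isBasis X hXE
  obtain ⟨BY, hBY, hBXBY⟩ := hBX.indep.subset_isBasis_of_subset (hBX.subset.trans hXY) hYE
  obtain ⟨B, hBb, hBYB⟩ := hBY.indep.subset_isBasis_of_subset hBY.indep.subset_ground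
  have clBX : M.closure BX = X := by rw [hBX.closure_eq_closure, hXflat.closure]
  have clBY : M.closure BY = Y := by rw [hBY.closure_eq_closure, hYflat.closure]
  have clB : M.closure B = M.E := by rw [hBb.closure_eq_closure, closure_ground]
  -- choose `a`
  have hXdep : BX ≠ X := by
    intro h
    obtain ⟨e, he⟩ := hXnonempty
    have hmem := cyclic_mem_closure hXcyc he
    exact (h ▸ hBX.indep).notMem_closure_diff_of_mem he hmem
  obtain ⟨a, haX, haBX⟩ : ∃ a, a ∈ X ∧ a ∉ BX := by
    by_contra hc; push_neg at hc
    exact hXdep (hBX.subset.antisymm hc)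
  -- choose `b`
  obtain ⟨b, hbBY, hbX⟩ : ∃ b, b ∈ BY ∧ b ∉ X := by
    by_contra hc; push_neg at hc
    have hsub : Y ⊆ X := by
      rw [← clBY, ← hXflat.closure]; exact M.closure_subset_closure hc
    exact hne (hXY.antisymm hsub)
  set K := BY \ {b} with hKdef
  have hbK : b ∉ K := fun h => h.2 rfl
  have hKBY : K ⊆ BY := diff_subset
  have hKindep : M.Indep K := hBY.indep.subset hKBY
  have hKE : K ⊆ M.E := hKindep.subset_ground
  have hBXK : BX ⊆ K := subset_diff_singleton hBXBY (fun h => hbX (hBX.subset h))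
  have hinsbK : insert b K = BY := by
    rw [hKdef, insert_diff_singleton, insert_eq_self.mpr hbBY]
  have hBYX : BX = BY ∩ X :=
    hBX.eq_of_subset_indep (hBY.indep.subset inter_subset_left)
      (subset_inter hBXBY hBX.subset) inter_subset_right
  have haBY : a ∉ BY := fun h => haBX (hBYX ▸ ⟨h, haX⟩)
  have haK : a ∉ K := fun h => haBY (hKBY h)
  have haclK : a ∈ M.closure K := by
    refine M.closure_subset_closure hBXK ?_
    rw [clBX]; exact haX
  have hbclK : b ∉ M.closure K := hBY.indep.notMem_closure_diff_of_mem hbBY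
  -- choose `c`
  obtain ⟨c, hcY, hcb, hcclK⟩ : ∃ c, c ∈ Y ∧ c ≠ b ∧ c ∉ M.closure K := by
    by_contra hc; push_neg at hc
    have hsub : Y \ {b} ⊆ M.closure K := fun x hx => hc x hx.1 hx.2
    have hb2 : b ∈ M.closure (Y \ {b}) := cyclic_mem_closure hYcyc (hBY.subset hbBY)
    exact hbclK (M.closure_subset_closure_of_subset_closure hsub hb2)
  have hcK : c ∉ K := fun h => hcclK (M.subset_closure K hKE h)
  have hcBY : c ∉ BY := by
    rw [← hinsbK]
    rintro (h | h)
    · exact hcb h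
    · exact hcK h
  have hcE : c ∈ M.E := hYE hcY
  -- choose `d`
  obtain ⟨d, hdB, hdY⟩ : ∃ d, d ∈ B ∧ d ∉ Y := by
    by_contra hc; push_neg at hc
    have hsub : M.E ⊆ Y := by
      rw [← clB, ← hYflat.closure]; exact M.closure_subset_closure hc
    exact hYneE (hYE.antisymm hsub)
  have hdE : d ∈ M.E := hBb.subset hdB
  -- distinctness
  have hab : a ≠ b := fun h => hbX (h ▸ haX)
  have hac : a ≠ c := fun h => hcclK (h ▸ haclK)
  have had : a ≠ d := fun h => hdY (h ▸ (hXY haX))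
  have hbc : b ≠ c := hcb.symm
  have hbd : b ≠ d := fun h => hdY (h ▸ hBY.subset hbBY)
  have hcd : c ≠ d := fun h => hdY (h ▸ hcY)
  -- independence facts
  have hKc : M.Indep (insert c K) := by
    rw [hKindep.insert_indep_iff_of_notMem hcK]; exact ⟨hcE, hcclK⟩
  have hKcY : insert c K ⊆ Y := insert_subset hcY (hKBY.trans hBY.subset)
  have hKcd : M.Indep (insert d (insert c K)) := by
    have hd : d ∉ insert c K := fun h => hdY (hKcY h)
    rw [hKc.insert_indep_iff_of_notMem hd]
    refine ⟨hdE, fun hmem => hdY ?_⟩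
    have h2 := M.closure_subset_closure hKcY hmem
    rwa [hYflat.closure] at h2
  have hKbd : M.Indep (insert d BY) := hBb.indep.subset (insert_subset hdB hBYB)
  -- dependence facts
  have hdep_a : ¬ M.Indep (insert a K) := fun h =>
    h.notMem_closure_diff_of_mem (mem_insert a K)
      (by rwa [insert_diff_self_of_notMem haK])
  have hcclBY : c ∈ M.closure BY := by rw [clBY]; exact hcY
  have hdep_bc : ¬ M.Indep (insert c BY) := fun h =>
    h.notMem_closure_diff_of_mem (mem_insert c BY)
      (by rwa [insert_diff_self_of_notMem hcBY])
  -- the minor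
  have hS4E : ({a, b, c, d} : Set α) ⊆ M.E := by
    intro x hx
    rcases hx with rfl | rfl | rfl | rfl
    · exact hXE haX
    · exact hYE (hBY.subset hbBY)
    · exact hcE
    · exact hdE
  have hdK : d ∉ K := fun h => hdY (hBY.subset (hKBY h))
  have hS4K : ∀ x ∈ ({a, b, c, d} : Set α), x ∉ K := by
    intro x hx
    rcases hx with rfl | rfl | rfl | rfl
    · exact haK
    · exact hbK
    · exact hcK
    · exact hdK
  set D : Set α := M.E \ (K ∪ {a, b, c, d}) with hDdef
  set N : Matroid α := mdelete (mcontract M K) D with hNdef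
  have hNE : N.E = ({a, b, c, d} : Set α) := by
    show ((M✶ ↾ (M✶.E \ K))✶ ↾ ((M✶ ↾ (M✶.E \ K))✶.E \ D)).E = _
    simp only [restrict_ground_eq, dual_ground]
    ext x
    simp only [hDdef, mem_diff, mem_union, not_and, not_not]
    constructor
    · rintro ⟨⟨hxE, hxK⟩, h2⟩
      rcases h2 hxE with h | h
      · exact absurd h hxK
      · exact h
    · intro hx
      exact ⟨⟨hS4E hx, hS4K x hx⟩, fun _ => Or.inr hx⟩
  refine hminor ⟨N, ⟨K, D, rfl⟩, a, b, c, d, ?_, hNE, ?_⟩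
  · simp [hab, hac, had, hbc, hbd, hcd]
  · intro I hI
    rw [hNE] at hI
    have hIE : I ⊆ M.E := hI.trans hS4E
    have hIK : Disjoint I K := Set.disjoint_left.mpr fun {x} hxI => hS4K x (hI hxI)
    have step1 : N.Indep I ↔ M.Indep (I ∪ K) := by
      rw [hNdef, mdelete, restrict_indep_iff, mcontract_indep_iff hKindep hIE hIK]
      refine and_iff_left ?_
      have : (mcontract M K).E \ D = N.E := rfl
      rw [this, hNE]; exact hI
    rw [step1]
    constructor
    · intro h
      constructor
      · intro haI
        exact hdep_a (h.subset (insert_subset (Or.inl haI) subset_union_right))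
      · intro hbcI
        refine hdep_bc (h.subset ?_)
        rw [← hinsbK]
        exact insert_subset (Or.inl (hbcI (by simp)))
          (insert_subset (Or.inl (hbcI (by simp))) subset_union_right)
    · rintro ⟨haI, hbcI⟩
      by_cases hbI : b ∈ I
      · have hcI : c ∉ I := fun h =>
          hbcI (by rw [Set.insert_subset_iff, Set.singleton_subset_iff]; exact ⟨hbI, h⟩)
        refine hKbd.subset ?_
        rw [← hinsbK]
        refine union_subset ?_ ((subset_insert b K).trans (subset_insert d _))
        intro x hxI
        rcases hI hxI with rfl | rfl | rfl | rfl
        · exact absurd hxI haI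
        · exact Or.inr (mem_insert _ _)
        · exact absurd hxI hcI
        · exact mem_insert _ _
      · refine hKcd.subset ?_
        refine union_subset ?_ ((subset_insert c K).trans (subset_insert d _))
        intro x hxI
        rcases hI hxI with rfl | rfl | rfl | rfl
        · exact absurd hxI haI
        · exact absurd hxI hbI
        · exact Or.inr (mem_insert _ _)
        · exact mem_insert _ _
end

section
/- A loopless, coloopless, disconnected matroid whose proper cyclic flats form a clutter is the direct sum of exactly two uniform matroids. -/
open Matroid Set

variable {α : Type*}

namespace MyAux

variable {M : Matroid α} {I J J₁ J₂ X Y B B₁ B₂ S₁ S₂ F : Set α}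

lemma bddAboveMrk (hfin : M.E.Finite) (Z : Set α) :
    BddAbove {n | ∃ I, M.Indep I ∧ I ⊆ Z ∧ I.ncard = n} := by
  refine ⟨M.E.ncard, ?_⟩
  rintro n ⟨I, hI, -, rfl⟩
  exact ncard_le_ncard hI.subset_ground hfin

lemma indep_card_le_mrk (hfin : M.E.Finite) (hJ : M.Indep J) (hJX : J ⊆ X) :
    J.ncard ≤ mrk M X :=
  le_csSup (bddAboveMrk hfin X) ⟨J, hJ, hJX, rfl⟩

lemma mrk_eq_of_basis' (hfin : M.E.Finite) (hI : M.IsBasis' I X) : mrk M X = I.ncard := by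
  refine le_antisymm (csSup_le ⟨0, ∅, M.empty_indep, empty_subset _, by simp⟩ ?_)
    (indep_card_le_mrk hfin hI.indep hI.subset)
  rintro n ⟨J, hJ, hJX, rfl⟩
  obtain ⟨J', hJ', hJJ'⟩ := hJ.subset_isBasis'_of_subset hJX
  have hcard : J'.ncard = I.ncard := by
    rw [ncard_def, hJ'.encard_eq_encard hI, ← ncard_def]
  exact hcard ▸ ncard_le_ncard hJJ' (hfin.subset hJ'.indep.subset_ground)

lemma mrk_eq_of_basis (hfin : M.E.Finite) (hI : M.IsBasis I X) : mrk M X = I.ncard :=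
  mrk_eq_of_basis' hfin hI.isBasis'

lemma flat_of_closure_subset (hF : F ⊆ M.E) (h : M.closure F ⊆ F) : M.IsFlat F := by
  refine ⟨fun I X hIF hIX => ?_, hF⟩
  have h1 : X ⊆ M.closure I := hIX.subset_closure
  rw [hIF.closure_eq_closure] at h1
  exact h1.trans h

lemma bases_union_indep (hfin : M.E.Finite) (hS12 : S₁ ∪ S₂ = M.E)
    (hle : mrk M S₁ + mrk M S₂ ≤ mrk M M.E)
    (hB₁ : M.IsBasis B₁ S₁) (hB₂ : M.IsBasis B₂ S₂) : M.Indep (B₁ ∪ B₂) := by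
  have hBE : B₁ ∪ B₂ ⊆ M.E := union_subset hB₁.indep.subset_ground hB₂.indep.subset_ground
  obtain ⟨K, hK⟩ := M.exists_isBasis (B₁ ∪ B₂) hBE
  have hsp : M.E ⊆ M.closure (B₁ ∪ B₂) := by
    rw [← hS12]
    refine union_subset ?_ ?_
    · refine (?_ : S₁ ⊆ M.closure B₁).trans (M.closure_subset_closure subset_union_left)
      rw [hB₁.closure_eq_closure]
      exact M.subset_closure S₁ (by rw [← hS12]; exact subset_union_left)
    · refine (?_ : S₂ ⊆ M.closure B₂).trans (M.closure_subset_closure subset_union_right)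
      rw [hB₂.closure_eq_closure]
      exact M.subset_closure S₂ (by rw [← hS12]; exact subset_union_right)
  have hKbase : M.IsBase K := hK.indep.isBase_of_ground_subset_closure
    (by rwa [hK.closure_eq_closure])
  have h1 : mrk M M.E = K.ncard := mrk_eq_of_basis hfin hKbase.isBasis_ground
  have h2 : mrk M S₁ = B₁.ncard := mrk_eq_of_basis hfin hB₁
  have h3 : mrk M S₂ = B₂.ncard := mrk_eq_of_basis hfin hB₂
  have h4 : K.ncard ≤ (B₁ ∪ B₂).ncard := ncard_le_ncard hK.subset (hfin.subset hBE)
  have h5 : (B₁ ∪ B₂).ncard ≤ B₁.ncard + B₂.ncard := ncard_union_le _ _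
  have hKeq : K = B₁ ∪ B₂ :=
    eq_of_subset_of_ncard_le hK.subset (by omega) (hfin.subset hBE)
  rw [← hKeq]; exact hK.indep

lemma union_indep (hfin : M.E.Finite) (hS12 : S₁ ∪ S₂ = M.E)
    (hle : mrk M S₁ + mrk M S₂ ≤ mrk M M.E)
    (hJ₁ : M.Indep J₁) (hJ₁S : J₁ ⊆ S₁) (hJ₂ : M.Indep J₂) (hJ₂S : J₂ ⊆ S₂) :
    M.Indep (J₁ ∪ J₂) := by
  have hS₁E : S₁ ⊆ M.E := by rw [← hS12]; exact subset_union_left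
  have hS₂E : S₂ ⊆ M.E := by rw [← hS12]; exact subset_union_right
  obtain ⟨B₁, hB₁, hJB₁⟩ := hJ₁.subset_isBasis_of_subset hJ₁S hS₁E
  obtain ⟨B₂, hB₂, hJB₂⟩ := hJ₂.subset_isBasis_of_subset hJ₂S hS₂E
  exact (bases_union_indep hfin hS12 hle hB₁ hB₂).subset (union_subset_union hJB₁ hJB₂)

lemma exists_basis_avoiding (hfin : M.E.Finite) (hcoloopless : ∀ e, ¬ IsColoopOf M e)
    (hdisj : Disjoint S₁ S₂) (hS12 : S₁ ∪ S₂ = M.E)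
    (hle : mrk M S₁ + mrk M S₂ ≤ mrk M M.E) {e : α} (he : e ∈ S₁) :
    ∃ B₁, M.IsBasis B₁ S₁ ∧ e ∉ B₁ := by
  have hS₁E : S₁ ⊆ M.E := by rw [← hS12]; exact subset_union_left
  have heE : e ∈ M.E := hS₁E he
  have hdual : M✶.Indep {e} := by
    have h := hcoloopless e
    rw [IsColoopOf, IsLoopOf, Matroid.dual_ground] at h
    push_neg at h
    exact h heE
  rw [Matroid.dual_indep_iff_exists' ] at hdual
  obtain ⟨-, B, hB, hdisjB⟩ := hdual
  have heB : e ∉ B := by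
    intro h; exact (disjoint_singleton_left.mp hdisjB) h
  have hBsplit : (B ∩ S₁) ∪ (B ∩ S₂) = B := by
    rw [← inter_union_distrib_left, hS12, inter_eq_self_of_subset_left hB.subset_ground]
  have hBfin : B.Finite := hfin.subset hB.subset_ground
  have hcardsum : (B ∩ S₁).ncard + (B ∩ S₂).ncard = B.ncard := by
    rw [← ncard_union_eq (hdisj.mono inter_subset_right inter_subset_right)
      (hBfin.subset inter_subset_left) (hBfin.subset inter_subset_left), hBsplit]
  have h1 : (B ∩ S₁).ncard ≤ mrk M S₁ :=
    indep_card_le_mrk hfin (hB.indep.subset inter_subset_left) inter_subset_right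
  have h2 : (B ∩ S₂).ncard ≤ mrk M S₂ :=
    indep_card_le_mrk hfin (hB.indep.subset inter_subset_left) inter_subset_right
  have hBcard : B.ncard = mrk M M.E := (mrk_eq_of_basis hfin hB.isBasis_ground).symm
  obtain ⟨B₁, hB₁, hsub⟩ := (hB.indep.subset inter_subset_left).subset_isBasis_of_subset
    (inter_subset_right (s := B) (t := S₁)) hS₁E
  have hB₁card : B₁.ncard = mrk M S₁ := (mrk_eq_of_basis hfin hB₁).symm
  have : B ∩ S₁ = B₁ := eq_of_subset_of_ncard_le hsub (by omega)
    (hfin.subset hB₁.indep.subset_ground)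
  exact ⟨B₁, hB₁, by rw [← this]; exact fun h => heB h.1⟩

end MyAux

namespace MyAux2
open MyAux
variable {M : Matroid α} {S S₁ S₂ : Set α}

lemma cyclic_of_bases (hS : S ⊆ M.E)
    (h : ∀ e ∈ S, ∃ B, (M ↾ S).IsBase B ∧ e ∉ B) : IsCyclicSet M S := by
  refine ⟨hS, fun e he hcol => ?_⟩
  obtain ⟨B, hB, heB⟩ := h e he
  refine hcol.2 ?_
  rw [Matroid.dual_indep_iff_exists']
  exact ⟨by simpa using he, B, hB, disjoint_singleton_left.mpr heB⟩

lemma side (hfin : M.E.Finite)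
    (hloopless : ∀ e, ¬ IsLoopOf M e) (hcoloopless : ∀ e, ¬ IsColoopOf M e)
    (hclutter : ∀ X Y, ProperCyclicFlat M X → ProperCyclicFlat M Y → X ⊆ Y → X = Y)
    (hdisj : Disjoint S₁ S₂) (hS12 : S₁ ∪ S₂ = M.E)
    (hne₁ : S₁.Nonempty) (hne₂ : S₂.Nonempty)
    (hle : mrk M S₁ + mrk M S₂ ≤ mrk M M.E) :
    ∀ X, X ⊆ S₁ → X.ncard ≤ mrk M S₁ → M.Indep X := by
  have hS₁E : S₁ ⊆ M.E := by rw [← hS12]; exact subset_union_left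
  have hS₂E : S₂ ⊆ M.E := by rw [← hS12]; exact subset_union_right
  have hsing : ∀ e ∈ M.E, M.Indep {e} := by
    intro e he
    have h := hloopless e
    rw [IsLoopOf] at h
    push_neg at h
    exact h he
  have hflat : M.IsFlat S₁ := by
    refine flat_of_closure_subset hS₁E fun e he => ?_
    by_contra heS₁
    have heE : e ∈ M.E := M.mem_ground_of_mem_closure he
    have heS₂ : e ∈ S₂ := ((hS12 ▸ heE : e ∈ S₁ ∪ S₂)).resolve_left heS₁
    obtain ⟨I₁, hI₁⟩ := M.exists_isBasis S₁ hS₁E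
    have hind : M.Indep (I₁ ∪ {e}) :=
      union_indep hfin hS12 hle hI₁.indep hI₁.subset (hsing e heE)
        (singleton_subset_iff.mpr heS₂)
    rw [union_singleton] at hind
    have hecl : e ∈ M.closure I₁ := by rw [hI₁.closure_eq_closure]; exact he
    have hdepins : M.Dep (insert e I₁) :=
      hI₁.indep.insert_dep_iff.mpr ⟨hecl, fun h => heS₁ (hI₁.subset h)⟩
    exact hdepins.not_indep hind
  have hpos₁ : 1 ≤ mrk M S₁ := by
    obtain ⟨e, he⟩ := hne₁
    simpa using indep_card_le_mrk hfin (hsing e (hS₁E he)) (singleton_subset_iff.mpr he)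
  have hpos₂ : 1 ≤ mrk M S₂ := by
    obtain ⟨e, he⟩ := hne₂
    simpa using indep_card_le_mrk hfin (hsing e (hS₂E he)) (singleton_subset_iff.mpr he)
  have hEgt : mrk M S₁ < mrk M M.E := by omega
  have hS₁cyc : IsCyclicSet M S₁ := by
    refine cyclic_of_bases hS₁E fun e he => ?_
    obtain ⟨B₁, hB₁, heB₁⟩ := exists_basis_avoiding hfin hcoloopless hdisj hS12 hle he
    exact ⟨B₁, hB₁.isBase_restrict, heB₁⟩
  have hS₁ne_ground : S₁ ≠ M.E := by
    intro h
    obtain ⟨x, hx⟩ := hne₂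
    exact disjoint_left.mp hdisj (h ▸ hS₂E hx) hx
  have hpcf₁ : ProperCyclicFlat M S₁ := ⟨hflat, hS₁cyc, by omega, hS₁ne_ground⟩
  have main : ∀ n, ∀ X, X ⊆ S₁ → X.ncard ≤ mrk M S₁ → X.ncard ≤ n → M.Indep X := by
    intro n
    induction n with
    | zero =>
      intro X hXS hXr hX0
      have hXfin : X.Finite := hfin.subset (hXS.trans hS₁E)
      rw [Nat.le_zero, ncard_eq_zero hXfin] at hX0
      rw [hX0]; exact M.empty_indep
    | succ n IH =>
      intro X hXS hXr hXn
      by_contra hdep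
      have hXfin : X.Finite := hfin.subset (hXS.trans hS₁E)
      have hXne : X.Nonempty := by
        rw [nonempty_iff_ne_empty]; rintro rfl; exact hdep M.empty_indep
      have h1card : 1 ≤ X.ncard := (ncard_pos hXfin).mpr hXne
      have circuit : ∀ e ∈ X, M.Indep (X \ {e}) := by
        intro e he
        have hd : (X \ {e}).ncard = X.ncard - 1 := ncard_diff_singleton_of_mem he
        exact IH _ (diff_subset.trans hXS) (by omega) (by omega)
      obtain ⟨e₀, he₀⟩ := hXne
      have hX2 : 2 ≤ X.ncard := by
        by_contra h
        have hc1 : X.ncard = 1 := by omega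
        obtain ⟨a, rfl⟩ := ncard_eq_one.mp hc1
        exact hdep (hsing a (hS₁E (hXS rfl)))
      have hXE : X ⊆ M.E := hXS.trans hS₁E
      have key : ∀ e ∈ X, M.IsBasis (X \ {e}) (M.closure X) := by
        intro e he
        have hind := circuit e he
        have hins : insert e (X \ {e}) = X := by
          rw [insert_diff_singleton, insert_eq_self.mpr he]
        have hecl : e ∈ M.closure (X \ {e}) := by
          have hiff := hind.insert_dep_iff (e := e)
          rw [hins] at hiff
          exact (hiff.mp ⟨hdep, hXE⟩).1
        have hclX : M.closure (X \ {e}) = M.closure X := by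
          refine subset_antisymm (M.closure_subset_closure diff_subset) ?_
          refine M.closure_subset_closure_of_subset_closure fun x hx => ?_
          rcases eq_or_ne x e with rfl | hxe
          · exact hecl
          · exact M.subset_closure _ hind.subset_ground ⟨hx, hxe⟩
        rw [← hclX]
        exact hind.isBasis_closure
      have hFE : M.closure X ⊆ M.E := M.closure_subset_ground X
      have hFcard : mrk M (M.closure X) = X.ncard - 1 := by
        rw [mrk_eq_of_basis hfin (key e₀ he₀), ncard_diff_singleton_of_mem he₀]
      have hFflat : M.IsFlat (M.closure X) :=
        flat_of_closure_subset hFE (by rw [M.closure_closure])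
      have hFcyc : IsCyclicSet M (M.closure X) := by
        refine cyclic_of_bases hFE fun e he => ?_
        by_cases heX : e ∈ X
        · exact ⟨X \ {e}, (key e heX).isBase_restrict, fun h => h.2 rfl⟩
        · exact ⟨X \ {e₀}, (key e₀ he₀).isBase_restrict, fun h => heX h.1⟩
      have hFne : M.closure X ≠ M.E := by
        intro h
        rw [h] at hFcard
        omega
      have hFS₁ : M.closure X ⊆ S₁ := by
        have h := M.closure_subset_closure hXS
        rwa [hflat.closure] at h
      have hFeq : M.closure X = S₁ :=
        hclutter _ S₁ ⟨hFflat, hFcyc, by omega, hFne⟩ hpcf₁ hFS₁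
      rw [hFeq] at hFcard
      omega
  intro X hXS hXr
  exact main X.ncard X hXS hXr le_rfl

end MyAux2


theorem stmt13 {α : Type*} (M : Matroid α) (hfin : M.E.Finite)
    (hloopless : ∀ e, ¬ IsLoopOf M e) (hcoloopless : ∀ e, ¬ IsColoopOf M e)
    (hdisconnected : ¬ ConnectedM M)
    (hclutter : ∀ X Y, ProperCyclicFlat M X → ProperCyclicFlat M Y → X ⊆ Y → X = Y) :
    ∃ (S₁ S₂ : Set α) (k₁ k₂ : ℕ), S₁.Nonempty ∧ S₂.Nonempty ∧ Disjoint S₁ S₂ ∧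
      S₁ ∪ S₂ = M.E ∧ k₁ ≤ S₁.ncard ∧ k₂ ≤ S₂.ncard ∧
      ∀ X, X ⊆ M.E → (M.Indep X ↔ (X ∩ S₁).ncard ≤ k₁ ∧ (X ∩ S₂).ncard ≤ k₂) := by
  classical
  rw [ConnectedM] at hdisconnected
  push_neg at hdisconnected
  obtain ⟨S₁, hS₁E, hne₁, hS₁neq, hle⟩ := hdisconnected
  set S₂ := M.E \ S₁ with hS₂def
  have hS₂E : S₂ ⊆ M.E := diff_subset
  have hdisj : Disjoint S₁ S₂ := disjoint_sdiff_right
  have hunion : S₁ ∪ S₂ = M.E := union_diff_cancel hS₁E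
  have hne₂ : S₂.Nonempty := by
    rw [hS₂def, diff_nonempty]
    exact fun h => hS₁neq (subset_antisymm hS₁E h)
  have huni₁ := MyAux2.side hfin hloopless hcoloopless hclutter hdisj hunion
    hne₁ hne₂ hle
  have huni₂ := MyAux2.side hfin hloopless hcoloopless hclutter hdisj.symm
    (by rw [union_comm]; exact hunion) hne₂ hne₁ (by omega)
  refine ⟨S₁, S₂, mrk M S₁, mrk M S₂, hne₁, hne₂, hdisj, hunion, ?_, ?_, ?_⟩
  · obtain ⟨I₁, hI₁⟩ := M.exists_isBasis S₁ hS₁E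
    rw [MyAux.mrk_eq_of_basis hfin hI₁]
    exact ncard_le_ncard hI₁.subset (hfin.subset hS₁E)
  · obtain ⟨I₂, hI₂⟩ := M.exists_isBasis S₂ hS₂E
    rw [MyAux.mrk_eq_of_basis hfin hI₂]
    exact ncard_le_ncard hI₂.subset (hfin.subset hS₂E)
  · intro X hX
    constructor
    · intro hXI
      exact ⟨MyAux.indep_card_le_mrk hfin (hXI.subset inter_subset_left) inter_subset_right,
        MyAux.indep_card_le_mrk hfin (hXI.subset inter_subset_left) inter_subset_right⟩
    · rintro ⟨h1, h2⟩
      have hi1 : M.Indep (X ∩ S₁) := huni₁ _ inter_subset_right h1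
      have hi2 : M.Indep (X ∩ S₂) := huni₂ _ inter_subset_right h2
      have hu : M.Indep ((X ∩ S₁) ∪ (X ∩ S₂)) :=
        MyAux.union_indep hfin hunion hle hi1 inter_subset_right hi2 inter_subset_right
      rwa [← inter_union_distrib_left, hunion, inter_eq_self_of_subset_left hX] at hu
end

section
/- The direct sum of two uniform matroids U_{r_1,n_1} and U_{r_2,n_2} is an elementary split matroid: it is represented on S = H_1 ∪ H_2 (where H_1, H_2 are the two disjoint ground sets) by hyperedges H_1, H_2 with values r = r_1 + r_2, r_1, r_2 satisfying (H1). -/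
open Matroid Set

variable {α : Type*}

theorem stmt14 {α : Type*} (M : Matroid α) (hfin : M.E.Finite)
    (H₁ H₂ : Set α) (r₁ r₂ : ℕ) (hdisj : Disjoint H₁ H₂) (hE : M.E = H₁ ∪ H₂)
    (hr₁ : r₁ ≤ H₁.ncard) (hr₂ : r₂ ≤ H₂.ncard)
    (hMI : ∀ X, X ⊆ M.E → (M.Indep X ↔ (X ∩ H₁).ncard ≤ r₁ ∧ (X ∩ H₂).ncard ≤ r₂)) :
    IsElemSplit M ∧
      ((H₁ ∩ H₂).ncard + (r₁ + r₂) ≤ r₁ + r₂) ∧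
      (∀ X, X ⊆ M.E → (M.Indep X ↔ X.ncard ≤ r₁ + r₂ ∧
        (X ∩ H₁).ncard ≤ r₁ ∧ (X ∩ H₂).ncard ≤ r₂)) := by
  have hint : H₁ ∩ H₂ = ∅ := hdisj.inter_eq
  have hH1E : H₁ ⊆ M.E := hE ▸ subset_union_left
  have hH2E : H₂ ⊆ M.E := hE ▸ subset_union_right
  have hcard : ∀ X : Set α, X ⊆ M.E → X.ncard = (X ∩ H₁).ncard + (X ∩ H₂).ncard := by
    intro X hX
    have hXfin : X.Finite := hfin.subset hX
    have : X = (X ∩ H₁) ∪ (X ∩ H₂) := by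
      rw [← inter_union_distrib_left, ← hE, inter_eq_self_of_subset_left hX]
    calc X.ncard = ((X ∩ H₁) ∪ (X ∩ H₂)).ncard := by rw [← this]
      _ = (X ∩ H₁).ncard + (X ∩ H₂).ncard :=
        ncard_union_eq (hdisj.mono inter_subset_right inter_subset_right)
          (hXfin.inter_of_left _) (hXfin.inter_of_left _)
  have hrE : r₁ + r₂ ≤ M.E.ncard := by
    have := hcard M.E subset_rfl
    rw [inter_eq_self_of_subset_right hH1E, inter_eq_self_of_subset_right hH2E] at this
    omega
  have key : ∀ X, X ⊆ M.E → (M.Indep X ↔ X.ncard ≤ r₁ + r₂ ∧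
      (X ∩ H₁).ncard ≤ r₁ ∧ (X ∩ H₂).ncard ≤ r₂) := by
    intro X hX
    rw [hMI X hX, hcard X hX]
    omega
  refine ⟨⟨2, ![H₁, H₂], r₁ + r₂, ![r₁, r₂], hfin, hrE, ?_, ?_, ?_⟩, by simp [hint], key⟩
  · intro i; fin_cases i <;> simpa using (by assumption : _ ⊆ M.E)
  · have h21 : H₂ ∩ H₁ = ∅ := by rw [inter_comm]; exact hint
    intro i j hij; fin_cases i <;> fin_cases j <;> simp [hint, h21] at hij ⊢ <;> omega
  · intro X hX
    rw [key X hX]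
    constructor
    · rintro ⟨h1, h2, h3⟩
      exact ⟨h1, fun i => by fin_cases i <;> simpa⟩
    · rintro ⟨h1, h2⟩
      exact ⟨h1, by simpa using h2 0, by simpa using h2 1⟩
end

section
/- Every paving matroid is an elementary split matroid. Specifically, if M is a rank-r paving matroid with bases {X ⊆ S : |X| = r, X ⊄ H_i for all i} for a family of proper subsets H_1,...,H_q with pairwise intersections of size at most r − 2, then M is the elementary split matroid given by hyperedges H_i with r_i = r − 1 for all i. -/
open Matroid Set

variable {α : Type*}

private lemma aug_lemma {α : Type*} {E : Set α} (hE : E.Finite) {q r : ℕ}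
    {H : Fin q → Set α} (hH : ∀ i, H i ⊂ E) (hrS : r ≤ E.ncard)
    (hint : ∀ i j : Fin q, i ≠ j → (H i ∩ H j).ncard + 2 ≤ r) :
    ∀ n (X : Set α), X ⊆ E → X.ncard + n = r → (∀ i, (X ∩ H i).ncard ≤ r - 1) →
      ∃ Y, X ⊆ Y ∧ Y ⊆ E ∧ Y.ncard = r ∧ ∀ i, (Y ∩ H i).ncard ≤ r - 1 := by
  intro n
  induction n with
  | zero => exact fun X hXE hcard hXH => ⟨X, Subset.rfl, hXE, by omega, hXH⟩
  | succ n ih =>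
    intro X hXE hcard hXH
    have hXfin : X.Finite := hE.subset hXE
    have hr1 : 1 ≤ r := by omega
    have step : ∃ e ∈ E \ X, ∀ i, ((insert e X) ∩ H i).ncard ≤ r - 1 := by
      by_cases htight : ∃ i, (X ∩ H i).ncard = r - 1
      · obtain ⟨i₀, hi₀⟩ := htight
        have hsub : X ∩ H i₀ ⊆ X := inter_subset_left
        have hXle := Set.ncard_le_ncard hsub hXfin
        have hXcard : X.ncard = r - 1 := by omega
        have hXeq : X ∩ H i₀ = X := Set.eq_of_subset_of_ncard_le hsub (by omega) hXfin
        have hXH0 : X ⊆ H i₀ := by rw [← hXeq]; exact inter_subset_right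
        obtain ⟨e, heE, heH⟩ := Set.exists_of_ssubset (hH i₀)
        have heX : e ∉ X := fun h => heH (hXH0 h)
        refine ⟨e, ⟨heE, heX⟩, fun j => ?_⟩
        by_cases hji : j = i₀
        · subst hji
          have heq : insert e X ∩ H j = X ∩ H j := by
            ext x
            simp only [Set.mem_inter_iff, Set.mem_insert_iff]
            constructor
            · rintro ⟨(rfl | hx), hxH⟩
              · exact absurd hxH heH
              · exact ⟨hx, hxH⟩
            · rintro ⟨hx, hxH⟩; exact ⟨Or.inr hx, hxH⟩
          rw [heq]; exact hXH j
        · have hjne : (X ∩ H j).ncard + 1 ≤ r - 1 := by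
            rcases lt_or_eq_of_le (hXH j) with h | h
            · omega
            · exfalso
              have hsubj : X ∩ H j ⊆ X := inter_subset_left
              have hXeqj : X ∩ H j = X :=
                Set.eq_of_subset_of_ncard_le hsubj (by omega) hXfin
              have hXHj : X ⊆ H j := by rw [← hXeqj]; exact inter_subset_right
              have hXij : X ⊆ H j ∩ H i₀ := subset_inter hXHj hXH0
              have h1 := hint j i₀ hji
              have h2 := Set.ncard_le_ncard hXij
                ((hE.subset (hH j).subset).inter_of_left _)
              omega
          have hss : insert e X ∩ H j ⊆ insert e (X ∩ H j) := by
            rintro x ⟨(rfl | hx1), hx2⟩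
            · exact Set.mem_insert _ _
            · exact Set.mem_insert_of_mem _ ⟨hx1, hx2⟩
          calc (insert e X ∩ H j).ncard
              ≤ (insert e (X ∩ H j)).ncard :=
                Set.ncard_le_ncard hss ((hXfin.inter_of_left _).insert e)
            _ ≤ (X ∩ H j).ncard + 1 := Set.ncard_insert_le _ _
            _ ≤ r - 1 := by omega
      · push_neg at htight
        have hXE' : X ⊂ E := by
          refine ssubset_of_subset_of_ne hXE (fun h => ?_)
          subst h; omega
        obtain ⟨e, heE, heX⟩ := Set.exists_of_ssubset hXE'
        refine ⟨e, ⟨heE, heX⟩, fun j => ?_⟩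
        have hj : (X ∩ H j).ncard + 1 ≤ r - 1 := by
          have h1 := hXH j
          have h2 := htight j
          omega
        have hss : insert e X ∩ H j ⊆ insert e (X ∩ H j) := by
          rintro x ⟨(rfl | hx1), hx2⟩
          · exact Set.mem_insert _ _
          · exact Set.mem_insert_of_mem _ ⟨hx1, hx2⟩
        calc (insert e X ∩ H j).ncard
            ≤ (insert e (X ∩ H j)).ncard :=
              Set.ncard_le_ncard hss ((hXfin.inter_of_left _).insert e)
          _ ≤ (X ∩ H j).ncard + 1 := Set.ncard_insert_le _ _
          _ ≤ r - 1 := by omega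
    obtain ⟨e, ⟨heE, heX⟩, heH⟩ := step
    obtain ⟨Y, hXY, hYE, hYr, hYH⟩ := ih (insert e X) (Set.insert_subset heE hXE)
      (by rw [Set.ncard_insert_of_notMem heX hXfin]; omega) heH
    exact ⟨Y, (Set.subset_insert e X).trans hXY, hYE, hYr, hYH⟩

theorem stmt15 {α : Type*} (M : Matroid α) (hfin : M.E.Finite) (q r : ℕ)
    (H : Fin q → Set α) (hH : ∀ i, H i ⊂ M.E) (hrS : r ≤ M.E.ncard)
    (hint : ∀ i j : Fin q, i ≠ j → (H i ∩ H j).ncard + 2 ≤ r)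
    (hbase : ∀ X, X ⊆ M.E → (M.IsBase X ↔ X.ncard = r ∧ ∀ i, ¬ X ⊆ H i)) :
    (∀ X, X ⊆ M.E → (M.Indep X ↔ X.ncard ≤ r ∧ ∀ i, (X ∩ H i).ncard ≤ r - 1)) ∧
      IsElemSplit M := by
  have hq0 : q = 0 ∨ 1 ≤ r := by
    obtain ⟨B, hB⟩ := M.exists_isBase
    have hBE := hB.subset_ground
    have h := (hbase B hBE).mp hB
    by_contra hc
    push_neg at hc
    obtain ⟨hq, hr⟩ := hc
    have hBfin : B.Finite := hfin.subset hBE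
    have hB0 : B = ∅ := by
      rw [← Set.ncard_eq_zero hBfin]; omega
    exact h.2 ⟨0, Nat.pos_of_ne_zero hq⟩ (by simp [hB0])
  have main : ∀ X, X ⊆ M.E →
      (M.Indep X ↔ X.ncard ≤ r ∧ ∀ i, (X ∩ H i).ncard ≤ r - 1) := by
    intro X hXE
    constructor
    · intro hI
      obtain ⟨B, hB, hXB⟩ := hI.exists_isBase_superset
      have hBE := hB.subset_ground
      have hBfin : B.Finite := hfin.subset hBE
      obtain ⟨hBr, hBH⟩ := (hbase B hBE).mp hB
      refine ⟨by have := Set.ncard_le_ncard hXB hBfin; omega, fun i => ?_⟩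
      have hsub : X ∩ H i ⊆ B := inter_subset_left.trans hXB
      have hle := Set.ncard_le_ncard hsub hBfin
      rcases lt_or_eq_of_le hle with h | h
      · omega
      · exfalso
        have heq : X ∩ H i = B := Set.eq_of_subset_of_ncard_le hsub (by omega) hBfin
        have : B ⊆ H i := by rw [← heq]; exact inter_subset_right
        exact hBH i this
    · rintro ⟨hXr, hXH⟩
      obtain ⟨Y, hXY, hYE, hYr, hYH⟩ :=
        aug_lemma hfin hH hrS hint (r - X.ncard) X hXE (by omega) hXH
      have hYbase : M.IsBase Y := by
        rw [hbase Y hYE]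
        refine ⟨hYr, fun i hYi => ?_⟩
        have hr1 : 1 ≤ r := by
          rcases hq0 with h | h
          · exact absurd i.2 (by omega)
          · exact h
        have heq : Y ∩ H i = Y := Set.inter_eq_left.mpr hYi
        have hle := hYH i
        rw [heq] at hle
        omega
      exact hYbase.indep.subset hXY
  refine ⟨main, q, H, r, fun _ => r - 1, hfin, hrS, fun i => (hH i).subset,
    fun i j hij => ?_, main⟩
  have := hint i j hij
  show (H i ∩ H j).ncard + r ≤ (r - 1) + (r - 1)
  omega
end
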